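/- arXiv:1808.05820 — 8 statements merged into one kernel-verified Lean document; each statement's English description precedes it below -/
import Mathlib

section
/- Fix integers K > 2 and l ≥ 2 and an arbitrary real family ω = (ω_x)_{x∈𝒩}. For every vertex x ∈ 𝒱_l and every eigenvalue E of the adjacency matrix Δ_{l−1} of the finite tree Λ_{l−1}, the number E + ω_x is an eigenvalue of the operator H^ω_𝒯 on ℓ²(𝒱) of multiplicity at least K − 1; that is, there exist K − 1 pairwise orthonormal vectors Ψ ∈ ℓ²(𝒱) with H^ω_𝒯 Ψ = (E + ω_x) Ψ. -/
/-!
Canopy tree setup.  The canopy tree `𝒯` of degree `K+1` has vertex set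
`𝒱 = ℤ × ℕ` and edges `{(x,n), (⌊x/K⌋, n+1)}`.  `canPar` is the parent map,
`canParIter k` its `k`-th iterate, `canBelow K v w` is the relation `v ≺ w`
(`v` lies on the shortest path from `w` to the boundary `∂𝒯 = ℤ × {0}`),
and `canLam K l w = Λ_l(w)`.
-/

/-- Vertex set of the canopy tree. -/
abbrev CanV : Type := ℤ × ℕ

/-- Parent map of the canopy tree of degree `K+1`: `(x,n) ↦ (⌊x/K⌋, n+1)`. -/
def canPar (K : ℕ) (v : CanV) : CanV := (Int.fdiv v.1 K, v.2 + 1)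

/-- `k`-th iterate of the parent map. -/
def canParIter (K k : ℕ) (v : CanV) : CanV := (canPar K)^[k] v

/-- `v ≺ w`: `v` lies on the shortest path from `w` to the boundary. -/
def canBelow (K : ℕ) (v w : CanV) : Prop := v.2 ≤ w.2 ∧ canParIter K (w.2 - v.2) v = w

/-- `Λ_l(w) = {v : v ≺ w, d(v,w) ≤ l}`. -/
def canLam (K l : ℕ) (w : CanV) : Set CanV := {v | canBelow K v w ∧ w.2 - v.2 ≤ l}

/-- The adjacency operator `Δ_𝒯` on functions on the canopy tree:
`(Δ u)(v) = Σ_{d(v,w)=1} u(w)`, i.e. the value at the parent of `v` plus the sum of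
the values at the `K` children of `v` (there are no children on the boundary level). -/
noncomputable def canAdjOp (K : ℕ) (u : CanV → ℂ) (v : CanV) : ℂ :=
  u (canPar K v) +
    if v.2 = 0 then 0 else ∑ r ∈ Finset.range K, u ((K : ℤ) * v.1 + (r : ℤ), v.2 - 1)

/-- The unique vertex `x ∈ 𝒩 = ∪_m 𝒱_{m(l+1)+l}` with `v ∈ Λ_l(x)`. -/
def canPot (K l : ℕ) (v : CanV) : CanV := canParIter K (l - v.2 % (l + 1)) v

/-- The random operator `H^ω_𝒯 = Δ_𝒯 + Σ_{x∈𝒩} ω_x P_{Λ_l(x)}`; since the sets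
`Λ_l(x)`, `x ∈ 𝒩`, partition `𝒱`, the potential at `v` is `ω` evaluated at the unique
`x ∈ 𝒩` with `v ∈ Λ_l(x)`. -/
noncomputable def canH (K l : ℕ) (ω : CanV → ℝ) (u : CanV → ℂ) (v : CanV) : ℂ :=
  canAdjOp K u v + (ω (canPot K l v) : ℂ) * u v

/-- `σ(Δ_{l-1})`: the set of (real) eigenvalues of the adjacency matrix of the finite tree
`Λ_{l-1}(x₀)` for `x₀ ∈ 𝒱_{l-1}` (all such trees are isomorphic, so we take
`x₀ = (0, l-1)`): those `E` admitting a nonzero eigenfunction supported in `Λ_{l-1}(x₀)`. -/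
def canLamSpec (K l : ℕ) : Set ℝ :=
  {E : ℝ | ∃ ψ : CanV → ℂ, ψ ≠ 0 ∧ (∀ v ∉ canLam K (l - 1) ((0 : ℤ), l - 1), ψ v = 0) ∧
    ∀ v ∈ canLam K (l - 1) ((0 : ℤ), l - 1), canAdjOp K ψ v = (E : ℂ) * ψ v}
section Helpers

lemma canParIter_succ' (K k : ℕ) (v : CanV) :
    canParIter K (k+1) v = canParIter K k (canPar K v) := by
  simp [canParIter, Function.iterate_succ_apply]

lemma canParIter_succ (K k : ℕ) (v : CanV) :
    canParIter K (k+1) v = canPar K (canParIter K k v) := by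
  simp [canParIter, Function.iterate_succ_apply']

lemma fdiv_shift {K : ℕ} (hK : 0 < K) (z c : ℤ) :
    Int.fdiv (z + c * K) K = Int.fdiv z K + c := by
  have hK' : (0:ℤ) ≤ K := by positivity
  rw [Int.fdiv_eq_ediv_of_nonneg _ hK', Int.fdiv_eq_ediv_of_nonneg _ hK']
  exact Int.add_mul_ediv_right z c (by exact_mod_cast hK.ne')

lemma fdiv_small {K : ℕ} (hK : 0 < K) {s : ℤ} (h0 : 0 ≤ s) (h1 : s < K) :
    Int.fdiv s K = 0 := by
  rw [Int.fdiv_eq_ediv_of_nonneg _ (by positivity)]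
  exact Int.ediv_eq_zero_of_lt h0 h1

lemma iter_rep (K : ℕ) (hK : 0 < K) :
    ∀ (k : ℕ) (c s : ℤ) (n : ℕ), 0 ≤ s → s < (K:ℤ)^k →
      canParIter K k (c * (K:ℤ)^k + s, n) = (c, n + k) := by
  intro k
  induction k with
  | zero =>
    intro c s n h0 h1
    have h1' : s < 1 := by simpa using h1
    have hs : s = 0 := by omega
    simp [canParIter, hs]
  | succ k ih =>
    intro c s n h0 h1
    rw [canParIter_succ']
    have hKz : (0:ℤ) < (K:ℤ) := by exact_mod_cast hK
    have h2 : canPar K (c * (K:ℤ)^(k+1) + s, n) = (c * (K:ℤ)^k + Int.fdiv s K, n+1) := by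
      simp only [canPar]
      congr 1
      have : c * (K:ℤ)^(k+1) + s = s + (c * (K:ℤ)^k) * K := by ring
      rw [this, fdiv_shift hK]
      ring
    rw [h2]
    have h0' : 0 ≤ Int.fdiv s K := by
      rw [Int.fdiv_eq_ediv_of_nonneg _ (le_of_lt hKz)]
      exact Int.ediv_nonneg h0 (le_of_lt hKz)
    have h1' : Int.fdiv s K < (K:ℤ)^k := by
      rw [Int.fdiv_eq_ediv_of_nonneg _ (le_of_lt hKz)]
      rw [Int.ediv_lt_iff_lt_mul hKz]
      calc s < (K:ℤ)^(k+1) := h1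
        _ = (K:ℤ)^k * K := by ring
    rw [ih c _ (n+1) h0' h1']
    congr 1
    omega

lemma iter_bounds (K : ℕ) (hK : 0 < K) :
    ∀ (k : ℕ) (z : ℤ) (n : ℕ) (c : ℤ), canParIter K k (z, n) = (c, n + k) →
      c * (K:ℤ)^k ≤ z ∧ z < (c+1) * (K:ℤ)^k := by
  intro k
  induction k with
  | zero =>
    intro z n c h
    simp [canParIter, Prod.ext_iff] at h
    subst h
    simp
  | succ k ih =>
    intro z n c h
    rw [canParIter_succ'] at h
    have hKz : (0:ℤ) < (K:ℤ) := by exact_mod_cast hK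
    have h2 : canPar K (z, n) = (Int.fdiv z K, n+1) := rfl
    rw [h2] at h
    have h' : canParIter K k (Int.fdiv z K, n+1) = (c, (n+1) + k) := by
      rw [h]; congr 1; omega
    obtain ⟨hb1, hb2⟩ := ih _ (n+1) c h'
    rw [Int.fdiv_eq_ediv_of_nonneg _ (le_of_lt hKz)] at hb1 hb2
    have hpos : (0:ℤ) < (K:ℤ)^k := by positivity
    constructor
    · have := Int.ediv_mul_le z (show (K:ℤ) ≠ 0 by exact_mod_cast hK.ne')
      calc c * (K:ℤ)^(k+1) = (c * (K:ℤ)^k) * K := by ring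
        _ ≤ (z / K) * K := by
            apply mul_le_mul_of_nonneg_right hb1 (le_of_lt hKz)
        _ ≤ z := this
    · have := Int.lt_ediv_add_one_mul_self z hKz
      have h3 : z / K + 1 ≤ (c+1) * (K:ℤ)^k := by omega
      calc z < (z / K + 1) * K := this
        _ ≤ ((c+1) * (K:ℤ)^k) * K := by
            apply mul_le_mul_of_nonneg_right h3 (le_of_lt hKz)
        _ = (c+1) * (K:ℤ)^(k+1) := by ring

lemma mem_lam_iff {K l : ℕ} (hK : 0 < K) (hl : 1 ≤ l) (z : ℤ) (n : ℕ) :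
    (z, n) ∈ canLam K (l-1) ((0:ℤ), l-1) ↔ n ≤ l-1 ∧ 0 ≤ z ∧ z < (K:ℤ)^(l-1-n) := by
  constructor
  · rintro ⟨⟨hn, hiter⟩, -⟩
    refine ⟨hn, ?_⟩
    have h' : canParIter K (l-1-n) (z, n) = (0, n + (l-1-n)) := by
      rw [hiter]; congr 1; omega
    have := iter_bounds K hK (l-1-n) z n 0 h'
    simpa using this
  · rintro ⟨hn, h0, h1⟩
    refine ⟨⟨hn, ?_⟩, Nat.sub_le _ _⟩
    have := iter_rep K hK (l-1-n) 0 z n h0 h1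
    simp only [zero_mul, zero_add] at this
    rw [this]
    congr 1
    omega

lemma level_le_of_mem_lam {K l : ℕ} {v : CanV} (h : v ∈ canLam K (l-1) ((0:ℤ), l-1)) :
    v.2 ≤ l-1 := h.1.1

end Helpers
section Helpers2

/-- Finset version of `Λ_{l-1}((0,l-1))`. -/
noncomputable def lamFin (K l : ℕ) : Finset CanV :=
  (Finset.range l).biUnion
    (fun n => (Finset.Ico (0:ℤ) ((K:ℤ)^(l-1-n))).image (fun z => (z, n)))

lemma mem_lamFin {K l : ℕ} {v : CanV} :
    v ∈ lamFin K l ↔ v.2 < l ∧ 0 ≤ v.1 ∧ v.1 < (K:ℤ)^(l-1-v.2) := by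
  obtain ⟨z, n⟩ := v
  simp only [lamFin, Finset.mem_biUnion, Finset.mem_range, Finset.mem_image,
    Finset.mem_Ico, Prod.mk.injEq]
  constructor
  · rintro ⟨m, hm, y, ⟨hy0, hy1⟩, hyz, hmn⟩
    subst hyz; subst hmn
    exact ⟨hm, hy0, hy1⟩
  · rintro ⟨hn, h0, h1⟩
    exact ⟨n, hn, z, ⟨h0, h1⟩, rfl, rfl⟩

lemma mem_lamFin_iff_mem_lam {K l : ℕ} (hK : 0 < K) (hl : 1 ≤ l) {v : CanV} :
    v ∈ lamFin K l ↔ v ∈ canLam K (l-1) ((0:ℤ), l-1) := by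
  obtain ⟨z, n⟩ := v
  rw [mem_lamFin, mem_lam_iff hK hl]
  simp only
  constructor <;> (rintro ⟨h1, h2, h3⟩; exact ⟨by omega, h2, h3⟩)

/-- Helmert-type coefficients. -/
noncomputable def coef (i r : ℕ) : ℝ :=
  if r < i+1 then (Real.sqrt ((i+1)*(i+2)))⁻¹
  else if r = i+1 then -((i:ℝ)+1) * (Real.sqrt ((i+1)*(i+2)))⁻¹
  else 0

lemma coef_zero {i r : ℕ} (h : i+2 ≤ r) : coef i r = 0 := by
  simp only [coef]
  rw [if_neg (by omega), if_neg (by omega)]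

lemma coef_sum_core (i : ℕ) : ∑ r ∈ Finset.range (i+2), coef i r = 0 := by
  rw [Finset.sum_range_succ]
  have h1 : ∀ r ∈ Finset.range (i+1), coef i r = (Real.sqrt ((i+1)*(i+2)))⁻¹ := by
    intro r hr
    rw [Finset.mem_range] at hr
    simp only [coef]
    rw [if_pos hr]
  rw [Finset.sum_congr rfl h1, Finset.sum_const, Finset.card_range]
  simp only [coef]
  rw [if_neg (by omega)]
  simp only [if_true]
  ring

lemma coef_sum {K i : ℕ} (hi : i + 2 ≤ K) : ∑ r ∈ Finset.range K, coef i r = 0 := by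
  rw [← Finset.sum_subset (Finset.range_subset_range.mpr hi)
    (fun r _ hr => coef_zero (by simpa using hr))]
  exact coef_sum_core i

lemma coef_orth_lt {K i j : ℕ} (hij : i < j) (hj : j + 2 ≤ K) :
    ∑ r ∈ Finset.range K, coef i r * coef j r = 0 := by
  have hi : i + 2 ≤ K := by omega
  rw [← Finset.sum_subset (Finset.range_subset_range.mpr hi)
    (fun r _ hr => by rw [coef_zero (by simpa using hr), zero_mul])]
  have h1 : ∀ r ∈ Finset.range (i+2),
      coef i r * coef j r = coef i r * (Real.sqrt ((j+1)*(j+2)))⁻¹ := by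
    intro r hr
    rw [Finset.mem_range] at hr
    congr 1
    simp only [coef]
    rw [if_pos (by omega)]
  rw [Finset.sum_congr rfl h1, ← Finset.sum_mul, coef_sum_core i, zero_mul]

lemma coef_orth {K i j : ℕ} (hi : i + 2 ≤ K) (hj : j + 2 ≤ K) :
    ∑ r ∈ Finset.range K, coef i r * coef j r = if i = j then 1 else 0 := by
  rcases lt_trichotomy i j with h | h | h
  · rw [if_neg h.ne, coef_orth_lt h hj]
  · subst h
    rw [if_pos rfl]
    rw [← Finset.sum_subset (Finset.range_subset_range.mpr hi)
      (fun r _ hr => by rw [coef_zero (by simpa using hr), zero_mul])]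
    rw [Finset.sum_range_succ]
    have hpos : (0:ℝ) < ((i:ℝ)+1)*((i:ℝ)+2) := by positivity
    have hs : (Real.sqrt ((i+1)*(i+2)))⁻¹ * (Real.sqrt ((i+1)*(i+2)))⁻¹
        = (((i:ℝ)+1)*((i:ℝ)+2))⁻¹ := by
      rw [← mul_inv]
      congr 1
      exact Real.mul_self_sqrt (le_of_lt hpos)
    have h1 : ∀ r ∈ Finset.range (i+1),
        coef i r * coef i r
        = (Real.sqrt ((i+1)*(i+2)))⁻¹ * (Real.sqrt ((i+1)*(i+2)))⁻¹ := by
      intro r hr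
      rw [Finset.mem_range] at hr
      simp only [coef]
      rw [if_pos hr]
    rw [Finset.sum_congr rfl h1, Finset.sum_const, Finset.card_range]
    simp only [coef]
    rw [if_neg (by omega)]
    simp only [if_true]
    rw [nsmul_eq_mul, hs]
    have : -((i:ℝ)+1) * (Real.sqrt ((i+1)*(i+2)))⁻¹ * (-((i:ℝ)+1) * (Real.sqrt ((i+1)*(i+2)))⁻¹)
        = ((i:ℝ)+1) * ((i:ℝ)+1) * ((Real.sqrt ((i+1)*(i+2)))⁻¹ * (Real.sqrt ((i+1)*(i+2)))⁻¹) := by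
      ring
    rw [this, hs]
    field_simp
    push_cast
    ring
  · rw [if_neg h.ne', ← coef_orth_lt h hi]
    exact Finset.sum_congr rfl (fun r _ => mul_comm _ _)

end Helpers2
section Helpers3

/-- Translate of `ψ` to the subtree with root shifted by `c` at level `l-1`. -/
noncomputable def phiC (K l : ℕ) (ψ : CanV → ℂ) (c : ℤ) (v : CanV) : ℂ :=
  if v.2 < l then ψ (v.1 - c * (K:ℤ)^(l-1-v.2), v.2) else 0

lemma adj_lin (K m : ℕ) (g : ℕ → CanV → ℂ) (b : ℂ) (v : CanV) :
    canAdjOp K (fun w => b * ∑ r ∈ Finset.range m, g r w) v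
      = b * ∑ r ∈ Finset.range m, canAdjOp K (g r) v := by
  simp only [canAdjOp]
  split_ifs with h
  · simp [Finset.mul_sum]
  · simp only [Finset.mul_sum, Finset.sum_add_distrib, mul_add]
    congr 1
    rw [Finset.sum_comm]

lemma adj_shift {K l : ℕ} (hK : 0 < K) (hl : 2 ≤ l) (ψ : CanV → ℂ)
    (hsupp : ∀ v ∉ canLam K (l-1) ((0:ℤ), l-1), ψ v = 0)
    (c z : ℤ) (n : ℕ) (hn : n ≤ l-1) :
    canAdjOp K (phiC K l ψ c) (z, n)
      = canAdjOp K ψ (z - c * (K:ℤ)^(l-1-n), n) := by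
  have hKz : (0:ℤ) < (K:ℤ) := by exact_mod_cast hK
  simp only [canAdjOp, canPar]
  congr 1
  · -- parent terms
    by_cases hcase : n + 1 ≤ l - 1
    · have hlt : n + 1 < l := by omega
      have hexp : l - 1 - n = (l - 1 - (n+1)) + 1 := by omega
      simp only [phiC, if_pos hlt]
      congr 2
      rw [hexp, pow_succ]
      have : z - c * ((K:ℤ)^(l-1-(n+1)) * K) = z + (-(c * (K:ℤ)^(l-1-(n+1)))) * K := by ring
      rw [this, fdiv_shift hK]
      ring
    · -- n = l - 1
      have hn' : n = l - 1 := by omega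
      have h1 : ¬ (n + 1 < l) := by omega
      simp only [phiC, if_neg h1]
      rw [eq_comm]
      apply hsupp
      intro hmem
      have := level_le_of_mem_lam hmem
      simp only at this
      omega
  · -- children terms
    by_cases h0 : n = 0
    · simp [h0]
    · rw [if_neg h0, if_neg h0]
      apply Finset.sum_congr rfl
      intro t _
      have hlt : n - 1 < l := by omega
      simp only [phiC, if_pos hlt]
      congr 2
      have hexp : l - 1 - (n - 1) = (l - 1 - n) + 1 := by omega
      rw [hexp, pow_succ]
      ring

lemma adj_out {K l : ℕ} (hK : 0 < K) (hl : 2 ≤ l) (ψ : CanV → ℂ)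
    (hsupp : ∀ v ∉ canLam K (l-1) ((0:ℤ), l-1), ψ v = 0)
    (z : ℤ) (n : ℕ) (hn : n ≤ l-1) (hout : (z, n) ∉ canLam K (l-1) ((0:ℤ), l-1)) :
    canAdjOp K ψ (z, n) = 0 := by
  have hKz : (0:ℤ) < (K:ℤ) := by exact_mod_cast hK
  rw [mem_lam_iff hK (by omega)] at hout
  push_neg at hout
  have hbad : ¬ (0 ≤ z ∧ z < (K:ℤ)^(l-1-n)) := by
    intro ⟨h1, h2⟩
    exact absurd h2 (by simpa using hout hn h1)
  simp only [canAdjOp, canPar]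
  have hpar : ψ (Int.fdiv z K, n + 1) = 0 := by
    apply hsupp
    rw [mem_lam_iff hK (by omega)]
    rintro ⟨h1, h2, h3⟩
    rw [Int.fdiv_eq_ediv_of_nonneg _ (le_of_lt hKz)] at h2 h3
    apply hbad
    constructor
    · by_contra hzneg
      push_neg at hzneg
      have := Int.ediv_neg_of_neg_of_pos hzneg hKz
      omega
    · have hb := Int.lt_ediv_add_one_mul_self z hKz
      have h4 : z / K + 1 ≤ (K:ℤ)^(l-1-(n+1)) := by omega
      have hexp : l - 1 - n = (l-1-(n+1)) + 1 := by omega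
      calc z < (z / K + 1) * K := hb
        _ ≤ (K:ℤ)^(l-1-(n+1)) * K := by
            apply mul_le_mul_of_nonneg_right h4 (le_of_lt hKz)
        _ = (K:ℤ)^(l-1-n) := by rw [hexp, pow_succ]
  rw [hpar]
  split_ifs with h0
  · simp
  · rw [zero_add]
    apply Finset.sum_eq_zero
    intro t ht
    rw [Finset.mem_range] at ht
    apply hsupp
    rw [mem_lam_iff hK (by omega)]
    rintro ⟨h1, h2, h3⟩
    have hexp : l - 1 - (n-1) = (l-1-n) + 1 := by omega
    rw [hexp, pow_succ] at h3
    apply hbad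
    have htz : (0:ℤ) ≤ t := by positivity
    have htK : (t:ℤ) < K := by exact_mod_cast ht
    constructor
    · by_contra hzneg
      push_neg at hzneg
      have hz1 : z ≤ -1 := by omega
      have : (K:ℤ) * z ≤ (K:ℤ) * (-1) := by
        apply mul_le_mul_of_nonneg_left hz1 (le_of_lt hKz)
      omega
    · have : (K:ℤ) * z < (K:ℤ)^(l-1-n) * K := by omega
      have h5 : (K:ℤ) * z < (K:ℤ) * (K:ℤ)^(l-1-n) := by linarith [this, mul_comm ((K:ℤ)^(l-1-n)) (K:ℤ)]
      exact lt_of_mul_lt_mul_left h5 (le_of_lt hKz)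

end Helpers3
section Helpers4

lemma div_unique {K : ℕ} (hK : 0 < K) {a z r t : ℤ}
    (hr : 0 ≤ r) (hrK : r < K) (ht : 0 ≤ t) (htK : t < K)
    (h : (K:ℤ) * z + t = (K:ℤ) * a + r) : z = a := by
  have hKz : (0:ℤ) < (K:ℤ) := by exact_mod_cast hK
  rcases lt_trichotomy z a with hc | hc | hc
  · have h1 : (K:ℤ) * (z+1) ≤ (K:ℤ) * a :=
      mul_le_mul_of_nonneg_left (by omega) (le_of_lt hKz)
    nlinarith
  · exact hc
  · have h1 : (K:ℤ) * (a+1) ≤ (K:ℤ) * z :=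
      mul_le_mul_of_nonneg_left (by omega) (le_of_lt hKz)
    nlinarith

lemma adj_phi_eq {K l : ℕ} (hK : 0 < K) (hl : 2 ≤ l) (ψ : CanV → ℂ) (E : ℝ)
    (hsupp : ∀ v ∉ canLam K (l-1) ((0:ℤ), l-1), ψ v = 0)
    (heig : ∀ v ∈ canLam K (l-1) ((0:ℤ), l-1), canAdjOp K ψ v = (E:ℂ) * ψ v)
    (c z : ℤ) (n : ℕ) (hn : n ≤ l-1) :
    canAdjOp K (phiC K l ψ c) (z, n) = (E:ℂ) * phiC K l ψ c (z, n) := by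
  rw [adj_shift hK hl ψ hsupp c z n hn]
  have hphi : phiC K l ψ c (z, n) = ψ (z - c * (K:ℤ)^(l-1-n), n) := by
    simp only [phiC]
    rw [if_pos (by omega : n < l)]
  rw [hphi]
  by_cases hmem : (z - c * (K:ℤ)^(l-1-n), n) ∈ canLam K (l-1) ((0:ℤ), l-1)
  · exact heig _ hmem
  · rw [adj_out hK hl ψ hsupp _ n hn hmem, hsupp _ hmem, mul_zero]

lemma adj_phi_high {K l : ℕ} (ψ : CanV → ℂ) (c z : ℤ) (n : ℕ) (hn : l + 1 ≤ n) :
    canAdjOp K (phiC K l ψ c) (z, n) = 0 := by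
  simp only [canAdjOp, canPar, phiC]
  simp only [show ¬ (n + 1 < l) by omega, show ¬ n = 0 by omega, if_false]
  rw [zero_add]
  apply Finset.sum_eq_zero
  intro t _
  rw [if_neg (by omega : ¬ (n - 1 < l))]

lemma adj_phi_top {K l : ℕ} (hK : 0 < K) (hl : 2 ≤ l) (ψ : CanV → ℂ)
    (hsupp : ∀ v ∉ canLam K (l-1) ((0:ℤ), l-1), ψ v = 0)
    (a z : ℤ) (r : ℕ) (hr : r < K) :
    canAdjOp K (phiC K l ψ ((K:ℤ)*a + r)) (z, l)
      = if z = a then ψ ((0:ℤ), l-1) else 0 := by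
  have hKz : (0:ℤ) < (K:ℤ) := by exact_mod_cast hK
  simp only [canAdjOp, canPar, phiC]
  simp only [show ¬ (l + 1 < l) by omega, show ¬ l = 0 by omega, if_false]
  rw [zero_add]
  have hexp : l - 1 - (l - 1) = 0 := by omega
  have hmem1 : ∀ y : ℤ, y ≠ 0 → ψ (y, l-1) = 0 := by
    intro y hy
    apply hsupp
    rw [mem_lam_iff hK (by omega)]
    rintro ⟨-, h2, h3⟩
    rw [hexp] at h3
    simp at h3
    omega
  have hterm : ∀ t : ℕ, t ∈ Finset.range K →
      (if l - 1 < l then ψ ((K:ℤ)*z + t - ((K:ℤ)*a + r) * (K:ℤ)^(l-1-(l-1)), l-1) else 0)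
        = ψ ((K:ℤ)*z + t - ((K:ℤ)*a + r), l-1) := by
    intro t _
    rw [if_pos (by omega : l - 1 < l), hexp]
    norm_num
  rw [Finset.sum_congr rfl hterm]
  split_ifs with hz
  · subst hz
    rw [Finset.sum_eq_single_of_mem r (Finset.mem_range.mpr hr)]
    · norm_num
    · intro t _ htr
      apply hmem1
      intro hbad
      apply htr
      have : (t:ℤ) = r := by linarith [hbad]
      exact_mod_cast this
  · apply Finset.sum_eq_zero
    intro t ht
    rw [Finset.mem_range] at ht
    apply hmem1
    intro hbad
    apply hz
    have h' : (K:ℤ) * z + t = (K:ℤ) * a + r := by linarith [hbad]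
    exact div_unique hK (by positivity) (by exact_mod_cast hr) (by positivity)
      (by exact_mod_cast ht) h'

lemma canPot_eq {K l : ℕ} (hK : 0 < K) (hl : 2 ≤ l) (a : ℤ) (r : ℕ) (hr : r < K)
    (z : ℤ) (n : ℕ) (hn : n ≤ l-1)
    (h0 : 0 ≤ z - ((K:ℤ)*a + r) * (K:ℤ)^(l-1-n))
    (h1 : z - ((K:ℤ)*a + r) * (K:ℤ)^(l-1-n) < (K:ℤ)^(l-1-n)) :
    canPot K l (z, n) = (a, l) := by
  have hKz : (0:ℤ) < (K:ℤ) := by exact_mod_cast hK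
  simp only [canPot]
  have hmod : n % (l+1) = n := Nat.mod_eq_of_lt (by omega)
  rw [hmod]
  have hln : l - n = (l-1-n) + 1 := by omega
  rw [hln, canParIter_succ]
  have hrep : canParIter K (l-1-n) (z, n) = ((K:ℤ)*a + r, l-1) := by
    have hz : z = ((K:ℤ)*a + r) * (K:ℤ)^(l-1-n) + (z - ((K:ℤ)*a + r) * (K:ℤ)^(l-1-n)) := by ring
    rw [hz]
    rw [iter_rep K hK (l-1-n) _ _ n h0 h1]
    congr 1
    omega
  rw [hrep]
  simp only [canPar]
  have h2 : l - 1 + 1 = l := by omega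
  rw [h2]
  congr 1
  have : (K:ℤ)*a + r = (r:ℤ) + a * K := by ring
  rw [this, fdiv_shift hK, fdiv_small hK (by positivity) (by exact_mod_cast hr)]
  ring

end Helpers4
section Helpers5

lemma adj_smul (K : ℕ) (c : ℂ) (f : CanV → ℂ) (v : CanV) :
    canAdjOp K (fun w => c * f w) v = c * canAdjOp K f v := by
  simp only [canAdjOp]
  split_ifs with h
  · simp
  · simp [Finset.mul_sum, mul_add]

lemma interval_unique {X c d z : ℤ} (hX : 0 < X)
    (h1 : 0 ≤ z - c * X) (h2 : z - c * X < X)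
    (h3 : 0 ≤ z - d * X) (h4 : z - d * X < X) : c = d := by
  rcases lt_trichotomy c d with h | h | h
  · have : (c+1) * X ≤ d * X := mul_le_mul_of_nonneg_right (by omega) (le_of_lt hX)
    nlinarith
  · exact h
  · have : (d+1) * X ≤ c * X := mul_le_mul_of_nonneg_right (by omega) (le_of_lt hX)
    nlinarith

lemma phi_ne_bounds {K l : ℕ} (hK : 0 < K) (hl : 2 ≤ l) (ψ : CanV → ℂ)
    (hsupp : ∀ v ∉ canLam K (l-1) ((0:ℤ), l-1), ψ v = 0)
    {c z : ℤ} {n : ℕ} (h : phiC K l ψ c (z, n) ≠ 0) :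
    n ≤ l - 1 ∧ 0 ≤ z - c * (K:ℤ)^(l-1-n) ∧ z - c * (K:ℤ)^(l-1-n) < (K:ℤ)^(l-1-n) := by
  simp only [phiC] at h
  by_cases hn : n < l
  · rw [if_pos hn] at h
    have hmem : (z - c * (K:ℤ)^(l-1-n), n) ∈ canLam K (l-1) ((0:ℤ), l-1) := by
      by_contra hm
      exact h (hsupp _ hm)
    rw [mem_lam_iff hK (by omega)] at hmem
    exact ⟨by omega, hmem.2⟩
  · rw [if_neg hn] at h
    exact absurd rfl h

end Helpers5

/-- For `K > 2`, `l ≥ 2`, any real family `ω`, any vertex `x ∈ 𝒱_l` and any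
eigenvalue `E` of `Δ_{l-1}`, the number `E + ω_x` is an eigenvalue of `H^ω_𝒯` of multiplicity
at least `K - 1`: there are `K - 1` pairwise orthonormal `Ψ ∈ ℓ²(𝒱)` with
`H^ω_𝒯 Ψ = (E + ω_x) Ψ`. -/
theorem canopy_eigenvalue_multiplicity
    (K l : ℕ) (hK : 2 < K) (hl : 2 ≤ l) (ω : CanV → ℝ)
    (x : CanV) (hx : x.2 = l) (E : ℝ) (hE : E ∈ canLamSpec K l) :
    ∃ Ψ : Fin (K - 1) → CanV → ℂ,
      (∀ i, Memℓp (Ψ i) 2) ∧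
      (∀ i v, canH K l ω (Ψ i) v = ((E + ω x : ℝ) : ℂ) * Ψ i v) ∧
      (∀ i j, ∑' v : CanV, (starRingEnd ℂ) (Ψ i v) * Ψ j v = if i = j then 1 else 0) := by
  obtain ⟨ψ, hψ0, hsupp, heig⟩ := hE
  have hK0 : 0 < K := by omega
  have hKz : (0:ℤ) < (K:ℤ) := by exact_mod_cast hK0
  obtain ⟨a, lx⟩ := x
  simp only at hx
  have hx' := hx.symm
  subst hx'
  -- normalization constant
  have N2pos : 0 < ∑ w ∈ lamFin K l, Complex.normSq (ψ w) := by
    obtain ⟨v, hv⟩ := Function.ne_iff.mp hψ0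
    have hvmem : v ∈ lamFin K l := by
      rw [mem_lamFin_iff_mem_lam hK0 (by omega)]
      by_contra hm
      exact hv (hsupp _ hm)
    apply Finset.sum_pos' (fun w _ => Complex.normSq_nonneg _)
    exact ⟨v, hvmem, Complex.normSq_pos.mpr hv⟩
  set N2 : ℝ := ∑ w ∈ lamFin K l, Complex.normSq (ψ w) with hN2def
  set N : ℝ := Real.sqrt N2 with hNdef
  have hNpos : 0 < N := Real.sqrt_pos.mpr N2pos
  have hNN : N * N = N2 := Real.mul_self_sqrt N2pos.le
  -- translated eigenfunctions
  set φ : ℕ → CanV → ℂ := fun r => phiC K l ψ ((K:ℤ)*a + r) with hφdef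
  -- common support
  set S : Finset CanV := (Finset.range K).biUnion
      (fun r => (lamFin K l).image
        (fun w => (w.1 + ((K:ℤ)*a + (r:ℤ)) * (K:ℤ)^(l-1-w.2), w.2))) with hSdef
  have hi2 : ∀ i : Fin (K-1), i.1 + 2 ≤ K := by
    intro i
    have := i.2
    omega
  -- support of each φ r
  have supp_phi : ∀ r : ℕ, ∀ v : CanV, φ r v ≠ 0 →
      v ∈ (lamFin K l).image
        (fun w => (w.1 + ((K:ℤ)*a + (r:ℤ)) * (K:ℤ)^(l-1-w.2), w.2)) := by
    intro r v hv
    obtain ⟨z, n⟩ := v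
    obtain ⟨hn, h0, h1⟩ := phi_ne_bounds hK0 hl ψ hsupp hv
    rw [Finset.mem_image]
    refine ⟨(z - ((K:ℤ)*a + (r:ℤ)) * (K:ℤ)^(l-1-n), n), ?_, ?_⟩
    · rw [mem_lamFin]
      exact ⟨by omega, h0, h1⟩
    · simp only
      congr 1
      ring
  have supp_phi' : ∀ r : ℕ, r < K → ∀ v ∉ S, φ r v = 0 := by
    intro r hr v hv
    by_contra h
    exact hv (Finset.mem_biUnion.mpr ⟨r, Finset.mem_range.mpr hr, supp_phi r v h⟩)
  -- the eigenfunctions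
  refine ⟨fun i v => ((N⁻¹ : ℝ) : ℂ) * ∑ r ∈ Finset.range K, ((coef i.1 r : ℝ) : ℂ) * φ r v,
    ?_, ?_, ?_⟩
  · -- Memℓp
    intro i
    apply memℓp_gen
    apply summable_of_ne_finset_zero (s := S)
    intro v hv
    have hzero : ∑ r ∈ Finset.range K, ((coef i.1 r : ℝ) : ℂ) * φ r v = 0 := by
      apply Finset.sum_eq_zero
      intro r hr
      rw [supp_phi' r (Finset.mem_range.mp hr) v hv, mul_zero]
    simp only [hzero, mul_zero, norm_zero]
    rw [Real.zero_rpow (by norm_num)]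
  · -- eigen-equation
    intro i v
    obtain ⟨z, n⟩ := v
    simp only [canH]
    rw [adj_lin K K (fun r w => ((coef i.1 r : ℝ) : ℂ) * φ r w) _ (z, n)]
    have hsmul : ∀ r ∈ Finset.range K,
        canAdjOp K (fun w => ((coef i.1 r : ℝ) : ℂ) * φ r w) (z, n)
          = ((coef i.1 r : ℝ) : ℂ) * canAdjOp K (φ r) (z, n) := by
      intro r _
      exact adj_smul K _ _ _
    rw [Finset.sum_congr rfl hsmul]
    have KEY : ∑ r ∈ Finset.range K, ((coef i.1 r : ℝ) : ℂ) * canAdjOp K (φ r) (z, n)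
        = (E:ℂ) * ∑ r ∈ Finset.range K, ((coef i.1 r : ℝ) : ℂ) * φ r (z, n) := by
      rcases Nat.lt_or_ge n l with hcase | hcase
      · -- n ≤ l - 1
        rw [Finset.mul_sum]
        apply Finset.sum_congr rfl
        intro r _
        simp only [hφdef]
        rw [adj_phi_eq hK0 hl ψ E hsupp heig _ z n (by omega)]
        ring
      · rcases Nat.eq_or_lt_of_le hcase with hcase' | hcase'
        · -- n = l
          subst hcase'
          have hphi0 : ∀ r : ℕ, φ r (z, l) = 0 := by
            intro r
            simp only [hφdef, phiC]
            rw [if_neg (by omega)]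
          have htop : ∀ r ∈ Finset.range K,
              ((coef i.1 r : ℝ) : ℂ) * canAdjOp K (φ r) (z, l)
                = ((coef i.1 r : ℝ) : ℂ) * (if z = a then ψ ((0:ℤ), l-1) else 0) := by
            intro r hr
            simp only [hφdef]
            rw [adj_phi_top hK0 hl ψ hsupp a z r (Finset.mem_range.mp hr)]
          rw [Finset.sum_congr rfl htop]
          simp only [hphi0, mul_zero, Finset.sum_const_zero]
          split_ifs with hz
          · rw [← Finset.sum_mul]
            have hcast : ∑ r ∈ Finset.range K, ((coef i.1 r : ℝ) : ℂ)
                = ((∑ r ∈ Finset.range K, coef i.1 r : ℝ) : ℂ) := by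
              push_cast
              rfl
            rw [hcast, coef_sum (hi2 i)]
            simp
          · simp
        · -- n ≥ l + 1
          have hphi0 : ∀ r : ℕ, φ r (z, n) = 0 := by
            intro r
            simp only [hφdef, phiC]
            rw [if_neg (by omega)]
          have hadj0 : ∀ r ∈ Finset.range K, canAdjOp K (φ r) (z, n) = 0 := by
            intro r _
            simp only [hφdef]
            exact adj_phi_high ψ _ z n (by omega)
          rw [Finset.sum_congr rfl (fun r hr => by rw [hadj0 r hr, mul_zero])]
          simp [hphi0]
    rw [KEY]
    set T : ℂ := ∑ r ∈ Finset.range K, ((coef i.1 r : ℝ) : ℂ) * φ r (z, n) with hTdef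
    by_cases hT : T = 0
    · rw [hT]
      simp
    · -- some φ r is nonzero at (z,n), so the potential is ω (a,l)
      have hex : ∃ r ∈ Finset.range K, ((coef i.1 r : ℝ) : ℂ) * φ r (z, n) ≠ 0 := by
        apply Finset.exists_ne_zero_of_sum_ne_zero
        rw [← hTdef]
        exact hT
      obtain ⟨r, hrK, hr0⟩ := hex
      have hr : φ r (z, n) ≠ 0 := fun h => hr0 (by rw [h, mul_zero])
      have hrphi : phiC K l ψ ((K:ℤ)*a + r) (z, n) ≠ 0 := by
        simpa only [hφdef] using hr
      obtain ⟨hn, h0, h1⟩ := phi_ne_bounds hK0 hl ψ hsupp hrphi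
      have hpot : canPot K l (z, n) = (a, l) :=
        canPot_eq hK0 hl a r (Finset.mem_range.mp hrK) z n hn h0 h1
      rw [hpot]
      push_cast
      ring
  · -- orthonormality
    intro i j
    have hvan : ∀ v ∉ S,
        (starRingEnd ℂ) (((N⁻¹:ℝ):ℂ) * ∑ r ∈ Finset.range K, ((coef i.1 r : ℝ):ℂ) * φ r v)
          * (((N⁻¹:ℝ):ℂ) * ∑ s ∈ Finset.range K, ((coef j.1 s : ℝ):ℂ) * φ s v) = 0 := by
      intro v hv
      have hz : ∑ s ∈ Finset.range K, ((coef j.1 s : ℝ):ℂ) * φ s v = 0 :=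
        Finset.sum_eq_zero fun s hs => by
          rw [supp_phi' s (Finset.mem_range.mp hs) v hv, mul_zero]
      rw [hz, mul_zero, mul_zero]
    rw [tsum_eq_sum hvan]
    -- the inner products of the translates
    have INNER : ∀ r ∈ Finset.range K, ∀ s ∈ Finset.range K,
        ∑ v ∈ S, (starRingEnd ℂ) (φ r v) * φ s v = if r = s then (N2:ℂ) else 0 := by
      intro r hrm s hsm
      by_cases hrs : r = s
      · subst hrs
        rw [if_pos rfl]
        have hsub : (lamFin K l).image
            (fun w => (w.1 + ((K:ℤ)*a + (r:ℤ)) * (K:ℤ)^(l-1-w.2), w.2)) ⊆ S := by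
          rw [hSdef]
          exact Finset.subset_biUnion_of_mem
            (fun r : ℕ => (lamFin K l).image
              (fun w => (w.1 + ((K:ℤ)*a + (r:ℤ)) * (K:ℤ)^(l-1-w.2), w.2))) hrm
        have hzero : ∀ v ∈ S, v ∉ (lamFin K l).image
            (fun w => (w.1 + ((K:ℤ)*a + (r:ℤ)) * (K:ℤ)^(l-1-w.2), w.2)) →
            (starRingEnd ℂ) (φ r v) * φ r v = 0 := by
          intro v _ hvn
          have : φ r v = 0 := by
            by_contra h
            exact hvn (supp_phi r v h)
          rw [this, mul_zero]
        rw [← Finset.sum_subset hsub hzero]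
        have hinj : ∀ w ∈ lamFin K l, ∀ y ∈ lamFin K l,
            (w.1 + ((K:ℤ)*a + (r:ℤ)) * (K:ℤ)^(l-1-w.2), w.2)
              = (y.1 + ((K:ℤ)*a + (r:ℤ)) * (K:ℤ)^(l-1-y.2), y.2) → w = y := by
          intro w _ y _ h
          rw [Prod.mk.injEq] at h
          obtain ⟨h1, h2⟩ := h
          rw [h2] at h1
          have : w.1 = y.1 := by linarith
          exact Prod.ext this h2
        rw [Finset.sum_image hinj]
        have hval : ∀ w ∈ lamFin K l,
            (starRingEnd ℂ) (φ r (w.1 + ((K:ℤ)*a + (r:ℤ)) * (K:ℤ)^(l-1-w.2), w.2))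
              * φ r (w.1 + ((K:ℤ)*a + (r:ℤ)) * (K:ℤ)^(l-1-w.2), w.2)
            = ((Complex.normSq (ψ w) : ℝ) : ℂ) := by
          intro w hw
          have hw2 : w.2 < l := (mem_lamFin.mp hw).1
          have hphiw : φ r (w.1 + ((K:ℤ)*a + (r:ℤ)) * (K:ℤ)^(l-1-w.2), w.2) = ψ w := by
            simp only [hφdef, phiC]
            rw [if_pos hw2]
            have harg : (w.1 + ((K:ℤ)*a + (r:ℤ)) * (K:ℤ)^(l-1-w.2)
                - ((K:ℤ)*a + (r:ℤ)) * (K:ℤ)^(l-1-w.2), w.2) = w := by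
              rw [← Prod.mk.eta (p := w), Prod.mk.injEq]
              exact ⟨by ring, rfl⟩
            rw [harg]
          rw [hphiw, mul_comm, Complex.mul_conj]
        rw [Finset.sum_congr rfl hval]
        rw [hN2def]
        push_cast
        rfl
      · rw [if_neg hrs]
        apply Finset.sum_eq_zero
        intro v _
        obtain ⟨z, n⟩ := v
        by_cases h1 : φ r (z, n) = 0
        · rw [h1]
          simp
        · by_cases h2 : φ s (z, n) = 0
          · rw [h2, mul_zero]
          · exfalso
            have hb1 := phi_ne_bounds hK0 hl ψ hsupp (by simpa only [hφdef] using h1 :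
              phiC K l ψ ((K:ℤ)*a + r) (z, n) ≠ 0)
            have hb2 := phi_ne_bounds hK0 hl ψ hsupp (by simpa only [hφdef] using h2 :
              phiC K l ψ ((K:ℤ)*a + s) (z, n) ≠ 0)
            have hpow : (0:ℤ) < (K:ℤ)^(l-1-n) := by positivity
            have heq : (K:ℤ)*a + (r:ℤ) = (K:ℤ)*a + (s:ℤ) :=
              interval_unique hpow hb1.2.1 hb1.2.2 hb2.2.1 hb2.2.2
            have : (r:ℤ) = (s:ℤ) := by linarith
            exact hrs (by exact_mod_cast this)
    -- expand the product
    have hexp : ∀ v ∈ S,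
        (starRingEnd ℂ) (((N⁻¹:ℝ):ℂ) * ∑ r ∈ Finset.range K, ((coef i.1 r : ℝ):ℂ) * φ r v)
          * (((N⁻¹:ℝ):ℂ) * ∑ s ∈ Finset.range K, ((coef j.1 s : ℝ):ℂ) * φ s v)
        = ((N⁻¹:ℝ):ℂ) * ((N⁻¹:ℝ):ℂ) *
            ∑ r ∈ Finset.range K, ∑ s ∈ Finset.range K,
              ((coef i.1 r : ℝ):ℂ) * ((coef j.1 s : ℝ):ℂ)
                * ((starRingEnd ℂ) (φ r v) * φ s v) := by
      intro v _
      rw [map_mul, map_sum, Complex.conj_ofReal]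
      have h1 : ∀ r ∈ Finset.range K,
          (starRingEnd ℂ) (((coef i.1 r : ℝ):ℂ) * φ r v)
            = ((coef i.1 r : ℝ):ℂ) * (starRingEnd ℂ) (φ r v) := by
        intro r _
        rw [map_mul, Complex.conj_ofReal]
      rw [Finset.sum_congr rfl h1, mul_mul_mul_comm, Finset.sum_mul_sum]
      congr 1
      apply Finset.sum_congr rfl
      intro r _
      apply Finset.sum_congr rfl
      intro s _
      ring
    rw [Finset.sum_congr rfl hexp, ← Finset.mul_sum, Finset.sum_comm]
    have hswap : ∀ r ∈ Finset.range K,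
        ∑ v ∈ S, ∑ s ∈ Finset.range K,
            ((coef i.1 r : ℝ):ℂ) * ((coef j.1 s : ℝ):ℂ)
              * ((starRingEnd ℂ) (φ r v) * φ s v)
        = ((coef i.1 r : ℝ):ℂ) * ((coef j.1 r : ℝ):ℂ) * (N2:ℂ) := by
      intro r hrm
      rw [Finset.sum_comm]
      have h2 : ∀ s ∈ Finset.range K,
          ∑ v ∈ S, ((coef i.1 r : ℝ):ℂ) * ((coef j.1 s : ℝ):ℂ)
              * ((starRingEnd ℂ) (φ r v) * φ s v)
          = ((coef i.1 r : ℝ):ℂ) * ((coef j.1 s : ℝ):ℂ)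
              * (if r = s then (N2:ℂ) else 0) := by
        intro s hsm
        rw [← Finset.mul_sum, INNER r hrm s hsm]
      rw [Finset.sum_congr rfl h2]
      rw [Finset.sum_eq_single_of_mem r hrm]
      · rw [if_pos rfl]
      · intro s hsm hsr
        rw [if_neg (fun h => hsr h.symm), mul_zero]
    rw [Finset.sum_congr rfl hswap]
    have hcoefsum : ∑ r ∈ Finset.range K,
        ((coef i.1 r : ℝ):ℂ) * ((coef j.1 r : ℝ):ℂ) * (N2:ℂ)
        = ((if i.1 = j.1 then (1:ℝ) else 0 : ℝ):ℂ) * (N2:ℂ) := by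
      rw [← Finset.sum_mul]
      congr 1
      have := coef_orth (K := K) (hi2 i) (hi2 j)
      calc ∑ r ∈ Finset.range K, ((coef i.1 r : ℝ):ℂ) * ((coef j.1 r : ℝ):ℂ)
          = ((∑ r ∈ Finset.range K, coef i.1 r * coef j.1 r : ℝ) : ℂ) := by
            push_cast
            rfl
        _ = _ := by rw [this]
    rw [hcoefsum]
    by_cases hij : i = j
    · subst hij
      rw [if_pos rfl, if_pos rfl]
      have hreal : (N⁻¹ * N⁻¹ * ((1:ℝ) * N2) : ℝ) = 1 := by
        rw [one_mul, ← hNN]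
        field_simp
      calc ((N⁻¹:ℝ):ℂ) * ((N⁻¹:ℝ):ℂ) * (((1:ℝ):ℂ) * (N2:ℂ))
          = ((N⁻¹ * N⁻¹ * ((1:ℝ) * N2) : ℝ) : ℂ) := by push_cast; ring
        _ = 1 := by rw [hreal]; norm_num
    · rw [if_neg hij, if_neg (fun h => hij (Fin.ext h))]
      norm_num
end

section
/- Fix integers K > 2 and l ≥ 2, a real family ω = (ω_x)_{x∈𝒩}, a vertex x ∈ 𝒱_l, an eigenvalue E of Δ_{l−1} and a normalized eigenvector ψ of Δ_{l−1} for E on the abstract tree 𝒯_{l−1} with root e. For a tuple α = (α_y)_{y∈N_x} of reals with Σ_{y∈N_x} α_y = 0, define Ψ^{(α)} ∈ ℓ²(𝒱) by Ψ^{(α)}(p) = α_y ψ(φ_y(p)) if p ≺ y for some y ∈ N_x, and Ψ^{(α)}(p) = 0 otherwise. Then H^ω_𝒯 Ψ^{(α)} = (E + ω_x) Ψ^{(α)}, and for any two such tuples α, β one has ⟨Ψ^{(α)}, Ψ^{(β)}⟩_{ℓ²(𝒱)} = Σ_{y∈N_x} α_y β_y. -/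
/-- The vector `Ψ^{(α)}`: for `x ∈ 𝒱_l`, the forward neighbours of `x` are
`y = (K·x₁ + r, l-1)`, `0 ≤ r < K`; a vertex `p` satisfies `p ≺ y` for some `y ∈ N_x`
iff `p.2 < l` and the `(l - p.2)`-fold parent of `p` is `x`, in which case
`y = canParIter K (l-1-p.2) p` and the isomorphism `φ_y : Λ_{l-1}(y) → 𝒯_{l-1}`
(onto the fixed copy `Λ_{l-1}((0,l-1))` with root `e = (0,l-1)`) is
`(w, j) ↦ (w - y₁·K^(l-1-j), j)`.  Then `Ψ^{(α)}(p) = α_y ψ(φ_y(p))` there and `0` elsewhere. -/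
noncomputable def canPsi (K l : ℕ) (x : CanV) (α : CanV → ℝ) (ψ : CanV → ℂ) (p : CanV) : ℂ :=
  if p.2 < l ∧ canParIter K (l - p.2) p = x then
    ((α (canParIter K (l - 1 - p.2) p) : ℝ) : ℂ) *
      ψ (p.1 - (canParIter K (l - 1 - p.2) p).1 * (K : ℤ) ^ (l - 1 - p.2), p.2)
  else 0


/-! ### Auxiliary lemmas -/

private lemma ediv_ediv_aux (a : ℤ) {b c : ℤ} (hb : 0 < b) (hc : 0 < c) :
    a / b / c = a / (b * c) := by
  have hbc : 0 < b * c := mul_pos hb hc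
  apply le_antisymm
  · rw [Int.le_ediv_iff_mul_le hbc]
    calc a / b / c * (b * c) = a / b / c * c * b := by ring
    _ ≤ a / b * b := mul_le_mul_of_nonneg_right (Int.ediv_mul_le (a / b) hc.ne') hb.le
    _ ≤ a := Int.ediv_mul_le a hb.ne'
  · rw [Int.le_ediv_iff_mul_le hc, Int.le_ediv_iff_mul_le hb]
    calc a / (b * c) * c * b = a / (b * c) * (b * c) := by ring
    _ ≤ a := Int.ediv_mul_le a hbc.ne'

private lemma fdiv_eq_iff_aux {b : ℤ} (hb : 0 < b) {a c : ℤ} :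
    Int.fdiv a b = c ↔ c * b ≤ a ∧ a < (c + 1) * b := by
  rw [Int.fdiv_eq_ediv_of_nonneg _ hb.le]
  constructor
  · rintro rfl
    exact ⟨(Int.le_ediv_iff_mul_le hb).1 le_rfl, (Int.ediv_lt_iff_lt_mul hb).1 (by omega)⟩
  · rintro ⟨h1, h2⟩
    have := (Int.le_ediv_iff_mul_le hb).2 h1
    have := (Int.ediv_lt_iff_lt_mul hb).2 h2
    omega

private lemma fdiv_fdiv_pow {K : ℕ} (hK : 0 < K) (a : ℤ) (m n : ℕ) :
    Int.fdiv (Int.fdiv a ((K : ℤ) ^ m)) ((K : ℤ) ^ n) = Int.fdiv a ((K : ℤ) ^ (m + n)) := by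
  have hKz : (0 : ℤ) < (K : ℤ) := by exact_mod_cast hK
  have h1 : (0 : ℤ) < (K : ℤ) ^ m := pow_pos hKz m
  have h2 : (0 : ℤ) < (K : ℤ) ^ n := pow_pos hKz n
  have h3 : (0 : ℤ) < (K : ℤ) ^ (m + n) := pow_pos hKz _
  rw [Int.fdiv_eq_ediv_of_nonneg _ h1.le, Int.fdiv_eq_ediv_of_nonneg _ h2.le, Int.fdiv_eq_ediv_of_nonneg _ h3.le,
    ediv_ediv_aux a h1 h2, pow_add]

private lemma fdiv_add_mul_aux {b : ℤ} (hb : 0 < b) (a c : ℤ) :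
    Int.fdiv (a + c * b) b = Int.fdiv a b + c := by
  rw [Int.fdiv_eq_ediv_of_nonneg _ hb.le, Int.fdiv_eq_ediv_of_nonneg _ hb.le, Int.add_mul_ediv_right a c hb.ne']

private lemma fdiv_K_mul_add {K : ℕ} (hK : 0 < K) (a : ℤ) (r : ℕ) (hr : r < K) :
    Int.fdiv ((K : ℤ) * a + (r : ℤ)) (K : ℤ) = a := by
  have hKz : (0 : ℤ) < (K : ℤ) := by exact_mod_cast hK
  have h0 : Int.fdiv (r : ℤ) (K : ℤ) = 0 := by
    rw [fdiv_eq_iff_aux hKz]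
    constructor
    · simpa using Int.ofNat_nonneg r
    · simpa using (by exact_mod_cast hr : (r : ℤ) < (K : ℤ))
  calc Int.fdiv ((K : ℤ) * a + (r : ℤ)) (K : ℤ)
      = Int.fdiv ((r : ℤ) + a * (K : ℤ)) (K : ℤ) := by ring_nf
    _ = a := by rw [fdiv_add_mul_aux hKz, h0, zero_add]

private lemma canParIter_eq {K : ℕ} (hK : 0 < K) (k : ℕ) (v : CanV) :
    canParIter K k v = (Int.fdiv v.1 ((K : ℤ) ^ k), v.2 + k) := by
  induction k with
  | zero => simp [canParIter]
  | succ k ih =>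
    unfold canParIter at ih ⊢
    rw [Function.iterate_succ_apply', ih]
    unfold canPar
    dsimp only
    have h := fdiv_fdiv_pow hK v.1 k 1
    rw [pow_one] at h
    rw [h, Nat.add_assoc]

private lemma canPsi_eval {K : ℕ} (hK : 0 < K) (l : ℕ) (x1 : ℤ) (α : CanV → ℝ)
    (ψ : CanV → ℂ) (a : ℤ) (j : ℕ) :
    canPsi K l (x1, l) α ψ (a, j)
      = if j < l ∧ Int.fdiv a ((K : ℤ) ^ (l - j)) = x1 then
          ((α (Int.fdiv a ((K : ℤ) ^ (l - 1 - j)), l - 1) : ℝ) : ℂ) *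
            ψ (a - Int.fdiv a ((K : ℤ) ^ (l - 1 - j)) * (K : ℤ) ^ (l - 1 - j), j)
        else 0 := by
  unfold canPsi
  rw [canParIter_eq hK, canParIter_eq hK]
  dsimp only
  by_cases h : j < l ∧ Int.fdiv a ((K : ℤ) ^ (l - j)) = x1
  · rw [if_pos, if_pos h]
    · have hj : j + (l - 1 - j) = l - 1 := by omega
      rw [hj]
    · refine ⟨h.1, ?_⟩
      rw [Prod.mk.injEq]
      exact ⟨h.2, by omega⟩
  · rw [if_neg, if_neg h]
    rintro ⟨h1, h2⟩
    rw [Prod.mk.injEq] at h2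
    exact h ⟨h1, h2.1⟩

private lemma mem_canLam_iff {K : ℕ} (hK : 0 < K) (l' : ℕ) (b : ℤ) (j : ℕ) :
    ((b, j) : CanV) ∈ canLam K l' ((0 : ℤ), l') ↔
      j ≤ l' ∧ Int.fdiv b ((K : ℤ) ^ (l' - j)) = 0 := by
  unfold canLam canBelow
  rw [Set.mem_setOf_eq, canParIter_eq hK]
  dsimp only
  constructor
  · rintro ⟨⟨h1, h2⟩, h3⟩
    rw [Prod.mk.injEq] at h2
    exact ⟨h1, h2.1⟩
  · rintro ⟨h1, h2⟩
    exact ⟨⟨h1, by rw [Prod.mk.injEq]; exact ⟨h2, by omega⟩⟩, by omega⟩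

/-- Shift equivalence of the canopy tree vertex set. -/
private def shiftE (K l : ℕ) (C : ℤ) : CanV ≃ CanV where
  toFun v := (v.1 + C * (K : ℤ) ^ (l - 1 - v.2), v.2)
  invFun v := (v.1 - C * (K : ℤ) ^ (l - 1 - v.2), v.2)
  left_inv v := by simp
  right_inv v := by simp

private lemma canopy_part1 (K l : ℕ) (hK : 2 < K) (hl : 2 ≤ l) (ω : CanV → ℝ)
    (x1 : ℤ) (E : ℝ) (ψ : CanV → ℂ)
    (hsupp : ∀ v ∉ canLam K (l - 1) ((0 : ℤ), l - 1), ψ v = 0)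
    (heig : ∀ v ∈ canLam K (l - 1) ((0 : ℤ), l - 1), canAdjOp K ψ v = (E : ℂ) * ψ v)
    (α : CanV → ℝ) (hα : (∑ r ∈ Finset.range K, α ((K : ℤ) * x1 + (r : ℤ), l - 1)) = 0)
    (p : CanV) :
    canH K l ω (canPsi K l (x1, l) α ψ) p
      = ((E + ω (x1, l) : ℝ) : ℂ) * canPsi K l (x1, l) α ψ p := by
  have hK0 : 0 < K := by omega
  have hKz : (0 : ℤ) < (K : ℤ) := by exact_mod_cast hK0
  obtain ⟨a, j⟩ := p
  set Ψ := canPsi K l (x1, l) α ψ with hΨ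
  by_cases hS : j < l ∧ Int.fdiv a ((K : ℤ) ^ (l - j)) = x1
  · obtain ⟨hjl, hfd⟩ := hS
    set m := l - 1 - j with hm
    have hm1 : l - j = m + 1 := by omega
    set c := Int.fdiv a ((K : ℤ) ^ m) with hc
    set q1 := a - c * (K : ℤ) ^ m with hq1
    have hq1Λ : ((q1, j) : CanV) ∈ canLam K (l - 1) ((0 : ℤ), l - 1) := by
      rw [mem_canLam_iff hK0]
      refine ⟨by omega, ?_⟩
      have hmm : l - 1 - j = m := by omega
      have h4 := fdiv_add_mul_aux (pow_pos hKz m) a (-c)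
      rw [hmm, hq1, show a - c * (K : ℤ) ^ m = a + (-c) * (K : ℤ) ^ m by ring, h4, ← hc]
      ring
    have hΨp : Ψ (a, j) = ((α (c, l - 1) : ℝ) : ℂ) * ψ (q1, j) := by
      rw [hΨ, canPsi_eval hK0, if_pos ⟨hjl, hfd⟩, ← hm, ← hc, ← hq1]
    have hpar : Ψ (Int.fdiv a (K : ℤ), j + 1)
        = ((α (c, l - 1) : ℝ) : ℂ) * ψ (Int.fdiv q1 (K : ℤ), j + 1) := by
      by_cases hj1 : j + 1 < l
      · have e1 : Int.fdiv (Int.fdiv a (K : ℤ)) ((K : ℤ) ^ (l - (j + 1))) = x1 := by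
          have h2 := fdiv_fdiv_pow hK0 a 1 (l - (j + 1))
          rw [pow_one] at h2
          rw [h2, show 1 + (l - (j + 1)) = l - j by omega]
          exact hfd
        have e2 : Int.fdiv (Int.fdiv a (K : ℤ)) ((K : ℤ) ^ (l - 1 - (j + 1))) = c := by
          have h2 := fdiv_fdiv_pow hK0 a 1 (l - 1 - (j + 1))
          rw [pow_one] at h2
          rw [h2, show 1 + (l - 1 - (j + 1)) = m by omega, hc]
        have e3 : Int.fdiv q1 (K : ℤ)
            = Int.fdiv a (K : ℤ) - c * (K : ℤ) ^ (l - 1 - (j + 1)) := by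
          rw [hq1, show a - c * (K : ℤ) ^ m
              = a + (-(c * (K : ℤ) ^ (l - 1 - (j + 1)))) * (K : ℤ) by
            rw [show m = (l - 1 - (j + 1)) + 1 by omega, pow_succ]; ring,
            fdiv_add_mul_aux hKz]
          ring
        rw [hΨ, canPsi_eval hK0, if_pos ⟨hj1, e1⟩, e2, e3]
      · have hz : ψ (Int.fdiv q1 (K : ℤ), j + 1) = 0 := by
          apply hsupp
          rw [mem_canLam_iff hK0]
          rintro ⟨h1, -⟩
          omega
        rw [hΨ, canPsi_eval hK0, if_neg (by rintro ⟨h1, -⟩; omega), hz, mul_zero]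
    have hchild : 1 ≤ j → ∀ r : ℕ, r < K →
        Ψ ((K : ℤ) * a + (r : ℤ), j - 1)
          = ((α (c, l - 1) : ℝ) : ℂ) * ψ ((K : ℤ) * q1 + (r : ℤ), j - 1) := by
      intro hj1 r hr
      have hfr : Int.fdiv ((K : ℤ) * a + (r : ℤ)) (K : ℤ) = a := fdiv_K_mul_add hK0 a r hr
      have e1 : Int.fdiv ((K : ℤ) * a + (r : ℤ)) ((K : ℤ) ^ (l - (j - 1))) = x1 := by
        have h2 := fdiv_fdiv_pow hK0 ((K : ℤ) * a + (r : ℤ)) 1 (l - j)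
        rw [pow_one, hfr] at h2
        rw [show l - (j - 1) = 1 + (l - j) by omega, ← h2]
        exact hfd
      have e2 : Int.fdiv ((K : ℤ) * a + (r : ℤ)) ((K : ℤ) ^ (l - 1 - (j - 1))) = c := by
        have h2 := fdiv_fdiv_pow hK0 ((K : ℤ) * a + (r : ℤ)) 1 m
        rw [pow_one, hfr] at h2
        rw [show l - 1 - (j - 1) = 1 + m by omega, ← h2, hc]
      have e3 : (K : ℤ) * a + (r : ℤ) - c * (K : ℤ) ^ (l - 1 - (j - 1))
          = (K : ℤ) * q1 + (r : ℤ) := by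
        rw [show l - 1 - (j - 1) = m + 1 by omega, hq1, pow_succ]; ring
      rw [hΨ, canPsi_eval hK0, if_pos ⟨by omega, e1⟩, e2, e3]
    have hPot : canPot K l ((a, j) : CanV) = ((x1, l) : CanV) := by
      unfold canPot
      rw [canParIter_eq hK0]
      dsimp only
      rw [Nat.mod_eq_of_lt (by omega : j < l + 1), hfd, Prod.mk.injEq]
      exact ⟨rfl, by omega⟩
    have hAdj : canAdjOp K Ψ (a, j) = ((α (c, l - 1) : ℝ) : ℂ) * canAdjOp K ψ (q1, j) := by
      unfold canAdjOp canPar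
      dsimp only
      rw [hpar, mul_add]
      congr 1
      by_cases hj0 : j = 0
      · rw [if_pos hj0, if_pos hj0, mul_zero]
      · rw [if_neg hj0, if_neg hj0, Finset.mul_sum]
        exact Finset.sum_congr rfl fun r hr => hchild (by omega) r (Finset.mem_range.1 hr)
    unfold canH
    rw [hPot, hAdj, heig _ hq1Λ, hΨp]
    push_cast
    ring
  · have hΨp : Ψ (a, j) = 0 := by rw [hΨ, canPsi_eval hK0, if_neg hS]
    have hpar : Ψ (Int.fdiv a (K : ℤ), j + 1) = 0 := by
      rw [hΨ, canPsi_eval hK0, if_neg]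
      rintro ⟨h1, h2⟩
      apply hS
      refine ⟨by omega, ?_⟩
      have h3 := fdiv_fdiv_pow hK0 a 1 (l - (j + 1))
      rw [pow_one] at h3
      rw [h3, show 1 + (l - (j + 1)) = l - j by omega] at h2
      exact h2
    have hch : (if j = 0 then (0 : ℂ)
        else ∑ r ∈ Finset.range K, Ψ ((K : ℤ) * a + (r : ℤ), j - 1)) = 0 := by
      by_cases hj0 : j = 0
      · rw [if_pos hj0]
      · rw [if_neg hj0]
        by_cases hjl : j < l
        · apply Finset.sum_eq_zero
          intro r hr
          rw [hΨ, canPsi_eval hK0, if_neg]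
          rintro ⟨h1, h2⟩
          apply hS
          refine ⟨hjl, ?_⟩
          have hfr := fdiv_K_mul_add hK0 a r (Finset.mem_range.1 hr)
          have h3 := fdiv_fdiv_pow hK0 ((K : ℤ) * a + (r : ℤ)) 1 (l - j)
          rw [pow_one, hfr] at h3
          rw [show l - (j - 1) = 1 + (l - j) by omega] at h2
          rw [h3]
          exact h2
        · by_cases hjeq : j = l ∧ a = x1
          · obtain ⟨hjeq, ha⟩ := hjeq
            have hval : ∀ r ∈ Finset.range K,
                Ψ ((K : ℤ) * a + (r : ℤ), j - 1)
                  = ((α ((K : ℤ) * a + (r : ℤ), l - 1) : ℝ) : ℂ) * ψ ((0 : ℤ), l - 1) := by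
              intro r hr
              have hfr := fdiv_K_mul_add hK0 a r (Finset.mem_range.1 hr)
              have e1 : Int.fdiv ((K : ℤ) * a + (r : ℤ)) ((K : ℤ) ^ (l - (j - 1))) = x1 := by
                rw [show l - (j - 1) = 1 by omega, pow_one, hfr]
                exact ha
              have e2 : Int.fdiv ((K : ℤ) * a + (r : ℤ)) ((K : ℤ) ^ (l - 1 - (j - 1)))
                  = (K : ℤ) * a + (r : ℤ) := by
                rw [show l - 1 - (j - 1) = 0 by omega, pow_zero, Int.fdiv_one]
              rw [hΨ, canPsi_eval hK0, if_pos ⟨by omega, e1⟩, e2,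
                show l - 1 - (j - 1) = 0 by omega, pow_zero, mul_one, sub_self,
                show j - 1 = l - 1 by omega]
            rw [Finset.sum_congr rfl hval, ← Finset.sum_mul]
            have : (∑ r ∈ Finset.range K, ((α ((K : ℤ) * a + (r : ℤ), l - 1) : ℝ) : ℂ)) = 0 := by
              rw [← Complex.ofReal_sum]
              rw [ha]
              rw [hα]
              exact Complex.ofReal_zero
            rw [this, zero_mul]
          · apply Finset.sum_eq_zero
            intro r hr
            rw [hΨ, canPsi_eval hK0, if_neg]
            rintro ⟨h1, h2⟩
            have hjl2 : j = l := by omega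
            have hfr := fdiv_K_mul_add hK0 a r (Finset.mem_range.1 hr)
            rw [show l - (j - 1) = 1 by omega, pow_one, hfr] at h2
            exact hjeq ⟨hjl2, h2⟩
    unfold canH canAdjOp canPar
    dsimp only
    rw [hΨp, hpar, hch]
    ring

private lemma canopy_part2 (K l : ℕ) (hK : 2 < K) (hl : 2 ≤ l)
    (x1 : ℤ) (ψ : CanV → ℂ)
    (hsupp : ∀ v ∉ canLam K (l - 1) ((0 : ℤ), l - 1), ψ v = 0)
    (hnorm : ∑' v : CanV, (starRingEnd ℂ) (ψ v) * ψ v = 1)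
    (α β : CanV → ℝ) :
    ∑' p : CanV, (starRingEnd ℂ) (canPsi K l (x1, l) α ψ p) * canPsi K l (x1, l) β ψ p
      = ∑ r ∈ Finset.range K,
          ((α ((K : ℤ) * x1 + (r : ℤ), l - 1) * β ((K : ℤ) * x1 + (r : ℤ), l - 1) : ℝ) : ℂ) := by
  have hK0 : 0 < K := by omega
  have hKz : (0 : ℤ) < (K : ℤ) := by exact_mod_cast hK0
  set C : ℕ → ℤ := fun r => (K : ℤ) * x1 + (r : ℤ) with hC
  set G : ℕ → CanV → ℂ := fun r p =>
    if p.2 ≤ l - 1 ∧ Int.fdiv p.1 ((K : ℤ) ^ (l - 1 - p.2)) = C r then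
      ((α (C r, l - 1) * β (C r, l - 1) : ℝ) : ℂ) *
        ((starRingEnd ℂ) (ψ (p.1 - C r * (K : ℤ) ^ (l - 1 - p.2), p.2)) *
          ψ (p.1 - C r * (K : ℤ) ^ (l - 1 - p.2), p.2))
    else 0 with hG
  have key : ∀ (r : ℕ) (v : CanV), G r (shiftE K l (C r) v)
      = ((α (C r, l - 1) * β (C r, l - 1) : ℝ) : ℂ) * ((starRingEnd ℂ) (ψ v) * ψ v) := by
    intro r v
    obtain ⟨b, j⟩ := v
    show G r (b + C r * (K : ℤ) ^ (l - 1 - j), j) = _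
    by_cases hv : j ≤ l - 1 ∧ Int.fdiv b ((K : ℤ) ^ (l - 1 - j)) = 0
    · rw [hG]
      dsimp only
      rw [if_pos, show b + C r * (K : ℤ) ^ (l - 1 - j) - C r * (K : ℤ) ^ (l - 1 - j) = b by ring]
      refine ⟨hv.1, ?_⟩
      rw [fdiv_add_mul_aux (pow_pos hKz _) b (C r), hv.2, zero_add]
    · have hψ : ψ (b, j) = 0 := hsupp _ (by rw [mem_canLam_iff hK0]; exact hv)
      rw [hG]
      dsimp only
      rw [if_neg, hψ]
      · simp
      · rintro ⟨h1, h2⟩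
        apply hv
        refine ⟨h1, ?_⟩
        rw [fdiv_add_mul_aux (pow_pos hKz _) b (C r)] at h2
        omega
  have hptwise : ∀ p : CanV, (starRingEnd ℂ) (canPsi K l (x1, l) α ψ p) * canPsi K l (x1, l) β ψ p
      = ∑ r ∈ Finset.range K, G r p := by
    intro p
    obtain ⟨a, j⟩ := p
    by_cases hS : j < l ∧ Int.fdiv a ((K : ℤ) ^ (l - j)) = x1
    · set m := l - 1 - j with hm
      set c := Int.fdiv a ((K : ℤ) ^ m) with hc
      have hca : Int.fdiv c (K : ℤ) = x1 := by
        have h2 := fdiv_fdiv_pow hK0 a m 1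
        rw [pow_one] at h2
        rw [hc, h2, show m + 1 = l - j by omega]
        exact hS.2
      have hcb := (fdiv_eq_iff_aux hKz).1 hca
      have hcb1 : (K : ℤ) * x1 ≤ c := by
        have := hcb.1; rw [mul_comm] at this; exact this
      have hcb2 : c < (K : ℤ) * x1 + K := by
        have := hcb.2; rw [add_mul, one_mul, mul_comm] at this; exact this
      set r0 : ℕ := (c - (K : ℤ) * x1).toNat with hr0
      have hr0z : (r0 : ℤ) = c - (K : ℤ) * x1 := by
        rw [hr0, Int.toNat_of_nonneg (by omega)]
      have hr0K : r0 < K := by omega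
      have hCr0 : C r0 = c := by rw [hC]; dsimp only; omega
      rw [Finset.sum_eq_single_of_mem r0 (Finset.mem_range.2 hr0K)]
      · rw [hG]
        dsimp only
        rw [if_pos ⟨by omega, by rw [hCr0, ← hm, ← hc]⟩]
        rw [canPsi_eval hK0 l x1 α ψ a j, canPsi_eval hK0 l x1 β ψ a j,
          if_pos hS, if_pos hS, ← hm, ← hc, hCr0]
        rw [map_mul, Complex.conj_ofReal]
        push_cast
        ring
      · intro r hr hne
        rw [hG]
        dsimp only
        rw [if_neg]
        rintro ⟨h1, h2⟩
        apply hne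
        rw [← hm, ← hc] at h2
        have : (r : ℤ) = (r0 : ℤ) := by
          rw [hC] at h2
          dsimp only at h2
          omega
        exact_mod_cast this
    · rw [canPsi_eval hK0 l x1 α ψ a j, canPsi_eval hK0 l x1 β ψ a j, if_neg hS, if_neg hS]
      rw [map_zero, zero_mul]
      symm
      apply Finset.sum_eq_zero
      intro r hr
      rw [hG]
      dsimp only
      rw [if_neg]
      rintro ⟨h1, h2⟩
      apply hS
      refine ⟨by omega, ?_⟩
      have h3 := fdiv_fdiv_pow hK0 a (l - 1 - j) 1
      rw [pow_one] at h3
      rw [show l - j = (l - 1 - j) + 1 by omega, ← h3, h2, hC]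
      dsimp only
      exact fdiv_K_mul_add hK0 x1 r (Finset.mem_range.1 hr)
  have hsummable : ∀ r : ℕ, Summable (G r) := by
    intro r
    have hsumψ : Summable (fun v : CanV =>
        ((α (C r, l - 1) * β (C r, l - 1) : ℝ) : ℂ) * ((starRingEnd ℂ) (ψ v) * ψ v)) := by
      apply summable_of_ne_finset_zero
        (s := (Finset.Ico (0 : ℤ) ((K : ℤ) ^ (l - 1))) ×ˢ Finset.range l)
      intro v hv
      rcases eq_or_ne (ψ v) 0 with h | h
      · rw [h]; simp
      exfalso
      apply hv
      obtain ⟨b, j⟩ := v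
      have hmem : ((b, j) : CanV) ∈ canLam K (l - 1) ((0 : ℤ), l - 1) := by
        by_contra hc
        exact h (hsupp _ hc)
      rw [mem_canLam_iff hK0] at hmem
      obtain ⟨h1, h2⟩ := hmem
      have h3 := (fdiv_eq_iff_aux (pow_pos hKz (l - 1 - j))).1 h2
      rw [zero_mul, zero_add, one_mul] at h3
      have h4 : (K : ℤ) ^ (l - 1 - j) ≤ (K : ℤ) ^ (l - 1) :=
        pow_le_pow_right₀ (by exact_mod_cast hK0) (by omega)
      rw [Finset.mem_product, Finset.mem_Ico, Finset.mem_range]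
      exact ⟨⟨h3.1, by omega⟩, by omega⟩
    have h5 : Summable ((G r) ∘ (shiftE K l (C r))) :=
      hsumψ.congr fun v => (key r v).symm
    exact (Equiv.summable_iff _).1 h5
  calc ∑' p : CanV, (starRingEnd ℂ) (canPsi K l (x1, l) α ψ p) * canPsi K l (x1, l) β ψ p
      = ∑' p : CanV, ∑ r ∈ Finset.range K, G r p := tsum_congr hptwise
    _ = ∑ r ∈ Finset.range K, ∑' p : CanV, G r p := Summable.tsum_finsetSum fun r _ => hsummable r
    _ = ∑ r ∈ Finset.range K, ((α (C r, l - 1) * β (C r, l - 1) : ℝ) : ℂ) := by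
        apply Finset.sum_congr rfl
        intro r hr
        rw [← (shiftE K l (C r)).tsum_eq (G r), tsum_congr (key r), tsum_mul_left, hnorm,
          mul_one]
    _ = _ := rfl

/-- For `x ∈ 𝒱_l`, an eigenvalue `E` of `Δ_{l-1}` with normalized
eigenvector `ψ` (on the fixed copy `Λ_{l-1}((0,l-1))` of `𝒯_{l-1}`), and any tuple
`α = (α_y)_{y ∈ N_x}` of reals with `Σ_y α_y = 0`, the vector `Ψ^{(α)}` satisfies
`H^ω_𝒯 Ψ^{(α)} = (E + ω_x) Ψ^{(α)}`; moreover for two such tuples `α, β` one has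
`⟨Ψ^{(α)}, Ψ^{(β)}⟩_{ℓ²(𝒱)} = Σ_{y ∈ N_x} α_y β_y`. -/
theorem canopy_explicit_eigenvectors
    (K l : ℕ) (hK : 2 < K) (hl : 2 ≤ l) (ω : CanV → ℝ)
    (x : CanV) (hx : x.2 = l) (E : ℝ) (ψ : CanV → ℂ)
    (hsupp : ∀ v ∉ canLam K (l - 1) ((0 : ℤ), l - 1), ψ v = 0)
    (heig : ∀ v ∈ canLam K (l - 1) ((0 : ℤ), l - 1), canAdjOp K ψ v = (E : ℂ) * ψ v)
    (hψne : ψ ≠ 0)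
    (hnorm : ∑' v : CanV, (starRingEnd ℂ) (ψ v) * ψ v = 1) :
    (∀ α : CanV → ℝ, (∑ r ∈ Finset.range K, α ((K : ℤ) * x.1 + (r : ℤ), l - 1)) = 0 →
      ∀ p : CanV, canH K l ω (canPsi K l x α ψ) p
        = ((E + ω x : ℝ) : ℂ) * canPsi K l x α ψ p) ∧
    (∀ α β : CanV → ℝ,
      (∑ r ∈ Finset.range K, α ((K : ℤ) * x.1 + (r : ℤ), l - 1)) = 0 →
      (∑ r ∈ Finset.range K, β ((K : ℤ) * x.1 + (r : ℤ), l - 1)) = 0 →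
      ∑' p : CanV, (starRingEnd ℂ) (canPsi K l x α ψ p) * canPsi K l x β ψ p
        = ∑ r ∈ Finset.range K,
            ((α ((K : ℤ) * x.1 + (r : ℤ), l - 1) * β ((K : ℤ) * x.1 + (r : ℤ), l - 1) : ℝ) : ℂ)) := by
  obtain ⟨x1, x2⟩ := x
  dsimp only at hx
  subst hx
  constructor
  · intro α hα p
    exact canopy_part1 K x2 hK hl ω x1 E ψ hsupp heig α hα p
  · intro α β hα hβ
    exact canopy_part2 K x2 hK hl x1 ψ hsupp hnorm α β
end

section
/- Let K > 2, l ≥ 2, and let (ω_x)_{x∈𝒩} be independent identically distributed real random variables whose common law μ is absolutely continuous with respect to Lebesgue measure. Then almost surely σ(Δ_{l−1}) + supp(μ) is contained in the pure point spectrum of H^ω_𝒯 (the closure of its set of eigenvalues), and almost surely every eigenvalue of the form E + ω_x with E ∈ σ(Δ_{l−1}) and x ∈ 𝒱_l has multiplicity at least K − 1. -/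
open MeasureTheory ProbabilityTheory

/-- The topological support of a Borel measure on `ℝ`. -/
def measSupport (μ : Measure ℝ) : Set ℝ :=
  {x : ℝ | ∀ U : Set ℝ, IsOpen U → x ∈ U → 0 < μ U}

/-- The set `𝒩 = ∪_{m≥0} 𝒱_{m(l+1)+l}` of centres of the perturbation blocks. -/
def canN (l : ℕ) : Set CanV := {x : CanV | x.2 % (l + 1) = l % (l + 1)}



section canopyAux

lemma canParIter_snd (K k : ℕ) (v : CanV) : (canParIter K k v).2 = v.2 + k := by
  induction k generalizing v with
  | zero => simp [canParIter]
  | succ k ih =>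
    have : canParIter K (k+1) v = canParIter K k (canPar K v) := by
      simp [canParIter, Function.iterate_succ_apply]
    rw [this, ih]
    simp [canPar]; omega

lemma canParIter_fst_eq {K : ℕ} (hK : 0 < K) :
    ∀ (k : ℕ) (y m : ℤ) (j : ℕ),
      (canParIter K k (y, j)).1 = m ↔ m * (K:ℤ)^k ≤ y ∧ y < (m+1) * (K:ℤ)^k := by
  intro k
  induction k with
  | zero => intro y m j; simp [canParIter]; omega
  | succ k ih =>
    intro y m j
    have hKZ : (0:ℤ) < (K:ℤ) := by exact_mod_cast hK
    have hstep : canParIter K (k+1) (y, j) = canParIter K k (y / (K:ℤ), j + 1) := by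
      simp [canParIter, Function.iterate_succ_apply, canPar, Int.fdiv_eq_ediv_of_nonneg _ hKZ.le]
    rw [hstep, ih]
    constructor
    · rintro ⟨h1, h2⟩
      rw [Int.le_ediv_iff_mul_le hKZ] at h1
      rw [Int.ediv_lt_iff_lt_mul hKZ] at h2
      constructor
      · calc m * (K:ℤ)^(k+1) = m * (K:ℤ)^k * K := by ring
          _ ≤ y := h1
      · calc y < (m+1) * (K:ℤ)^k * K := h2
          _ = (m+1) * (K:ℤ)^(k+1) := by ring
    · rintro ⟨h1, h2⟩
      constructor
      · rw [Int.le_ediv_iff_mul_le hKZ]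
        calc m * (K:ℤ)^k * K = m * (K:ℤ)^(k+1) := by ring
          _ ≤ y := h1
      · rw [Int.ediv_lt_iff_lt_mul hKZ]
        calc y < (m+1) * (K:ℤ)^(k+1) := h2
          _ = (m+1) * (K:ℤ)^k * K := by ring

lemma mem_canLam_iff_s3 {K : ℕ} (hK : 0 < K) (n : ℕ) (v : CanV) :
    v ∈ canLam K n ((0:ℤ), n) ↔ v.2 ≤ n ∧ 0 ≤ v.1 ∧ v.1 < (K:ℤ)^(n - v.2) := by
  obtain ⟨y, j⟩ := v
  simp only [canLam, canBelow, Set.mem_setOf_eq]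
  constructor
  · rintro ⟨⟨hj, hit⟩, -⟩
    refine ⟨hj, ?_⟩
    have h1 : (canParIter K (n - j) (y, j)).1 = 0 := by rw [hit]
    rw [canParIter_fst_eq hK] at h1
    simpa using h1
  · rintro ⟨hj, h0, h1⟩
    refine ⟨⟨hj, ?_⟩, by omega⟩
    have hfst : (canParIter K (n - j) (y, j)).1 = 0 := by
      rw [canParIter_fst_eq hK]; constructor <;> simpa
    have hsnd := canParIter_snd K (n - j) (y, j)
    ext
    · exact hfst
    · simp at hsnd ⊢; omega

section dev2
variable {K n : ℕ} {ψ : CanV → ℂ}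
lemma adj_off (hK : 0 < K)
    (hsupp : ∀ v : CanV, ¬(v.2 ≤ n ∧ 0 ≤ v.1 ∧ v.1 < (K:ℤ)^(n - v.2)) → ψ v = 0)
    (v : CanV) (hv : v.2 ≤ n) (hy : ¬(0 ≤ v.1 ∧ v.1 < (K:ℤ)^(n - v.2))) :
    canAdjOp K ψ v = 0 := by
  obtain ⟨y, j⟩ := v
  simp only at hv hy
  have hKZ : (0:ℤ) < (K:ℤ) := by exact_mod_cast hK
  have hpar : ψ (canPar K (y, j)) = 0 := by
    apply hsupp
    rintro ⟨h1, h2, h3⟩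
    simp only [canPar] at h1 h2 h3
    have hj : j < n := by omega
    rw [Int.fdiv_eq_ediv_of_nonneg _ hKZ.le] at h2 h3
    have e2 : (0:ℤ) ≤ y := by
      have := (Int.le_ediv_iff_mul_le hKZ (a := 0) (b := y)).mp h2; linarith
    have he : n - j = (n - (j+1)) + 1 := by omega
    have e3 : y < (K:ℤ)^(n-j) := by
      rw [Int.ediv_lt_iff_lt_mul hKZ] at h3
      rw [he, pow_succ]; exact h3
    exact hy ⟨e2, e3⟩
  rw [canAdjOp, hpar, zero_add]
  split
  · rfl
  · rename_i hj0
    apply Finset.sum_eq_zero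
    intro r hr
    rw [Finset.mem_range] at hr
    apply hsupp
    rintro ⟨h1, h2, h3⟩
    simp only at h1 h2 h3
    have hrK : ((r:ℤ)) < (K:ℤ) := by exact_mod_cast hr
    have hr0 : (0:ℤ) ≤ (r:ℤ) := Int.natCast_nonneg r
    have he : n - (j-1) = (n - j) + 1 := by omega
    rw [he, pow_succ] at h3
    have hp : (0:ℤ) ≤ (K:ℤ)^(n-j) := by positivity
    have e2 : (0:ℤ) ≤ y := by nlinarith
    have e3 : y < (K:ℤ)^(n-j) := by nlinarith
    exact hy ⟨e2, e3⟩

lemma adj_commute (hK : 0 < K)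
    (hsupp : ∀ v : CanV, ¬(v.2 ≤ n ∧ 0 ≤ v.1 ∧ v.1 < (K:ℤ)^(n - v.2)) → ψ v = 0)
    (m : ℤ) (v : CanV) (hv : v.2 ≤ n) :
    canAdjOp K (fun w => ψ (w.1 - m * (K:ℤ)^(n - w.2), w.2)) v
      = canAdjOp K ψ (v.1 - m * (K:ℤ)^(n - v.2), v.2) := by
  obtain ⟨y, j⟩ := v
  simp only at hv
  have hKZ : (0:ℤ) < (K:ℤ) := by exact_mod_cast hK
  rw [canAdjOp, canAdjOp]
  congr 1
  · -- parent terms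
    simp only [canPar]
    rcases eq_or_lt_of_le hv with hjn | hjn
    · -- j = n : both at level n+1, both zero
      have h1 : ψ ((Int.fdiv y K) - m * (K:ℤ)^(n - (j+1)), j + 1) = 0 := by
        apply hsupp; rintro ⟨h, -⟩; omega
      have h2 : ψ (Int.fdiv (y - m * (K:ℤ)^(n - j)) K, j + 1) = 0 := by
        apply hsupp; rintro ⟨h, -⟩; omega
      simp only [h1, h2]
    · -- j < n
      have he : n - j = (n - (j+1)) + 1 := by omega
      congr 2
      rw [Int.fdiv_eq_ediv_of_nonneg _ hKZ.le, Int.fdiv_eq_ediv_of_nonneg _ hKZ.le]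
      rw [he, pow_succ]
      have : y - m * ((K:ℤ)^(n-(j+1)) * K) = y + (-(m * (K:ℤ)^(n-(j+1)))) * K := by ring
      rw [this, Int.add_mul_ediv_right _ _ hKZ.ne']
      ring
  · -- children terms
    split
    · rfl
    · rename_i hj0
      apply Finset.sum_congr rfl
      intro r hr
      congr 2
      have he : n - (j-1) = (n - j) + 1 := by omega
      rw [he, pow_succ]
      ring
end dev2

lemma adj_sum {M : ℕ} (K : ℕ) (c : Fin M → ℂ) (g : Fin M → CanV → ℂ) (v : CanV) :
    canAdjOp K (fun w => ∑ r : Fin M, c r * g r w) v = ∑ r : Fin M, c r * canAdjOp K (g r) v := by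
  simp only [canAdjOp, mul_add, Finset.sum_add_distrib]
  congr 1
  split
  · simp
  · rw [Finset.sum_comm]
    simp [Finset.mul_sum]

section main
variable {K l : ℕ}

lemma eigen_main (hK : 2 < K) (hl : 2 ≤ l) (E : ℝ) (ψ : CanV → ℂ)
    (hsupp : ∀ v ∉ canLam K (l-1) ((0:ℤ), l-1), ψ v = 0)
    (heig : ∀ v ∈ canLam K (l-1) ((0:ℤ), l-1), canAdjOp K ψ v = (E:ℂ) * ψ v)
    (a : ℤ) (c : Fin K → ℂ) (hc : ∑ r, c r = 0) (W : CanV → ℝ) (v : CanV) :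
    canH K l W
        (fun w => ∑ r : Fin K, c r * ψ (w.1 - ((K:ℤ)*a + (r:ℤ)) * (K:ℤ)^((l-1) - w.2), w.2)) v
      = ((E + W (a, l) : ℝ) : ℂ) *
        (∑ r : Fin K, c r * ψ (v.1 - ((K:ℤ)*a + (r:ℤ)) * (K:ℤ)^((l-1) - v.2), v.2)) := by
  have hK0 : 0 < K := by omega
  have hKZ : (0:ℤ) < (K:ℤ) := by exact_mod_cast hK0
  set n := l - 1 with hn
  have hln : l = n + 1 := by omega
  -- coordinate form of the support hypothesis
  have hs : ∀ w : CanV, ¬(w.2 ≤ n ∧ 0 ≤ w.1 ∧ w.1 < (K:ℤ)^(n - w.2)) → ψ w = 0 := by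
    intro w hw
    exact hsupp w (by rw [mem_canLam_iff_s3 hK0]; exact hw)
  have hs' : ∀ w : CanV, ψ w ≠ 0 → (w.2 ≤ n ∧ 0 ≤ w.1 ∧ w.1 < (K:ℤ)^(n - w.2)) := by
    intro w hw; by_contra h; exact hw (hs w h)
  rcases le_or_gt v.2 n with hv | hv
  · -- levels ≤ n
    rw [canH, adj_sum]
    have hadj : ∀ r : Fin K,
        canAdjOp K (fun w => ψ (w.1 - ((K:ℤ)*a + (r:ℤ)) * (K:ℤ)^(n - w.2), w.2)) v
          = (E:ℂ) * ψ (v.1 - ((K:ℤ)*a + (r:ℤ)) * (K:ℤ)^(n - v.2), v.2) := by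
      intro r
      rw [adj_commute hK0 hs _ _ hv]
      set w : CanV := (v.1 - ((K:ℤ)*a + (r:ℤ)) * (K:ℤ)^(n - v.2), v.2) with hwdef
      by_cases hw : w.2 ≤ n ∧ 0 ≤ w.1 ∧ w.1 < (K:ℤ)^(n - w.2)
      · exact heig w (by rw [mem_canLam_iff_s3 hK0]; exact hw)
      · rw [adj_off hK0 hs w hv (by simpa [hwdef, hv] using hw), hs w hw, mul_zero]
    simp only [hadj]
    set S := ∑ r : Fin K, c r * ψ (v.1 - ((K:ℤ)*a + (r:ℤ)) * (K:ℤ)^(n - v.2), v.2) with hS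
    have hsum : ∑ r : Fin K, c r * ((E:ℂ) * ψ (v.1 - ((K:ℤ)*a + (r:ℤ)) * (K:ℤ)^(n - v.2), v.2))
        = (E:ℂ) * S := by
      rw [hS, Finset.mul_sum]; apply Finset.sum_congr rfl; intros; ring
    rw [hsum]
    by_cases hz : S = 0
    · rw [hz]; ring
    · have hpot : canPot K l v = (a, l) := by
        obtain ⟨r, -, hr⟩ : ∃ r ∈ Finset.univ, c r * ψ (v.1 - ((K:ℤ)*a + (r:ℤ)) * (K:ℤ)^(n - v.2), v.2) ≠ 0 := by
          by_contra h
          push_neg at h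
          exact hz (Finset.sum_eq_zero h)
        have hψ : ψ (v.1 - ((K:ℤ)*a + (r:ℤ)) * (K:ℤ)^(n - v.2), v.2) ≠ 0 := by
          intro h; exact hr (by rw [h, mul_zero])
        obtain ⟨-, h1, h2⟩ := hs' _ hψ
        simp only at h1 h2
        have hmod : v.2 % (l + 1) = v.2 := Nat.mod_eq_of_lt (by omega)
        have hpow : (K:ℤ)^(l - v.2) = (K:ℤ)^(n - v.2) * K := by
          rw [show l - v.2 = (n - v.2) + 1 by omega, pow_succ]
        have hP : (0:ℤ) < (K:ℤ)^(n - v.2) := by positivity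
        have hr0 : (0:ℤ) ≤ (r:ℤ) := Int.natCast_nonneg _
        have hrK : ((r:ℤ)) < (K:ℤ) := by exact_mod_cast r.2
        have hfst : (canParIter K (l - v.2) (v.1, v.2)).1 = a := by
          rw [canParIter_fst_eq hK0, hpow]
          constructor
          · nlinarith
          · nlinarith
        have hsnd := canParIter_snd K (l - v.2) (v.1, v.2)
        rw [canPot, hmod]
        have : (v.1, v.2) = v := rfl
        rw [this] at hfst hsnd
        ext
        · exact hfst
        · simp only at hsnd ⊢; omega
      rw [hpot]
      push_cast
      ring
  · -- levels ≥ n + 1 : everything vanishes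
    have hzero : ∀ w : CanV, n < w.2 →
        (∑ r : Fin K, c r * ψ (w.1 - ((K:ℤ)*a + (r:ℤ)) * (K:ℤ)^(n - w.2), w.2)) = 0 := by
      intro w hw
      apply Finset.sum_eq_zero
      intro r _
      rw [hs (w.1 - ((K:ℤ)*a + (r:ℤ)) * (K:ℤ)^(n - w.2), w.2) (by rintro ⟨h, -⟩; simp at h; omega),
        mul_zero]
    have hv0 := hzero v hv
    rw [canH, hv0, mul_zero, mul_zero, add_zero]
    rw [canAdjOp]
    have hpar : (∑ r : Fin K, c r *
        ψ ((canPar K v).1 - ((K:ℤ)*a + (r:ℤ)) * (K:ℤ)^(n - (canPar K v).2), (canPar K v).2)) = 0 :=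
      hzero _ (by simp [canPar]; omega)
    rw [hpar, zero_add]
    have hv0' : v.2 ≠ 0 := by omega
    rw [if_neg hv0']
    rcases Nat.lt_or_ge n (v.2 - 1) with hc1 | hc1
    · -- v.2 ≥ n+2 : children also vanish
      apply Finset.sum_eq_zero
      intro s _
      exact hzero _ hc1
    · -- v.2 = n+1 : children at level n
      have hvl : v.2 = n + 1 := by omega
      have hchild : ∀ s : ℕ, ((K:ℤ) * v.1 + (s:ℤ), v.2 - 1) = (((K:ℤ) * v.1 + (s:ℤ), n) : CanV) := by
        intro s; rw [hvl]; rfl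
      by_cases hy : v.1 = a
      · -- centre column
        have hterm : ∀ s ∈ Finset.range K,
            (∑ r : Fin K, c r * ψ ((K:ℤ) * v.1 + (s:ℤ) - ((K:ℤ)*a + (r:ℤ)) * (K:ℤ)^(n - n), n))
            = (∑ r : Fin K, c r * (if (r:ℕ) = s then ψ ((0:ℤ), n) else 0)) := by
          intro s hs2
          apply Finset.sum_congr rfl
          intro r _
          congr 1
          rw [Nat.sub_self, pow_zero, mul_one, hy]
          by_cases hrs : (r:ℕ) = s
          · rw [if_pos hrs]
            congr 2
            have : (r:ℤ) = (s:ℤ) := by exact_mod_cast hrs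
            omega
          · rw [if_neg hrs]
            apply hs
            rintro ⟨-, h1, h2⟩
            rw [Nat.sub_self, pow_zero] at h2
            simp only at h1 h2
            have : (r:ℤ) = (s:ℤ) := by omega
            exact hrs (by exact_mod_cast this)
        calc ∑ s ∈ Finset.range K,
              ((fun w => ∑ r : Fin K, c r * ψ (w.1 - ((K:ℤ)*a + (r:ℤ)) * (K:ℤ)^(n - w.2), w.2))
                ((K:ℤ) * v.1 + (s:ℤ), v.2 - 1))
            = ∑ s ∈ Finset.range K,
              (∑ r : Fin K, c r * ψ ((K:ℤ) * v.1 + (s:ℤ) - ((K:ℤ)*a + (r:ℤ)) * (K:ℤ)^(n - n), n)) := by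
              apply Finset.sum_congr rfl; intro s _; rw [hchild s]
          _ = ∑ s ∈ Finset.range K, (∑ r : Fin K, c r * (if (r:ℕ) = s then ψ ((0:ℤ), n) else 0)) :=
              Finset.sum_congr rfl hterm
          _ = ∑ r : Fin K, c r * (∑ s ∈ Finset.range K, (if (r:ℕ) = s then ψ ((0:ℤ), n) else 0)) := by
              rw [Finset.sum_comm]; simp [Finset.mul_sum]
          _ = ∑ r : Fin K, c r * ψ ((0:ℤ), n) := by
              apply Finset.sum_congr rfl
              intro r _
              congr 1
              rw [Finset.sum_ite_eq (Finset.range K) (r:ℕ) (fun _ => ψ ((0:ℤ), n))]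
              rw [if_pos (Finset.mem_range.mpr r.2)]
          _ = 0 := by rw [← Finset.sum_mul, hc, zero_mul]
      · -- off-centre column : all terms vanish
        apply Finset.sum_eq_zero
        intro s hs2
        rw [Finset.mem_range] at hs2
        rw [hchild s]
        apply Finset.sum_eq_zero
        intro r _
        rw [hs ((K:ℤ) * v.1 + (s:ℤ) - ((K:ℤ)*a + (r:ℤ)) * (K:ℤ)^(n - n), n) ?_, mul_zero]
        rintro ⟨-, h1, h2⟩
        rw [Nat.sub_self, pow_zero, mul_one] at h1 h2
        simp only at h1 h2
        have hz0 : (K:ℤ) * v.1 + (s:ℤ) - ((K:ℤ)*a + (r:ℤ)) = 0 := by omega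
        have hd : (K:ℤ) * (v.1 - a) = (r:ℤ) - (s:ℤ) := by linarith
        have hr0 : (0:ℤ) ≤ (r:ℤ) := Int.natCast_nonneg _
        have hrK : ((r:ℤ)) < (K:ℤ) := by exact_mod_cast r.2
        have hsK : ((s:ℤ)) < (K:ℤ) := by exact_mod_cast hs2
        have hs0 : (0:ℤ) ≤ (s:ℤ) := Int.natCast_nonneg _
        rcases lt_or_gt_of_ne (fun h : v.1 = a => hy h) with hd1 | hd1
        · nlinarith
        · nlinarith

end main

lemma exists_ortho_sum_zero (K : ℕ) (hK : 0 < K) :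
    ∃ c : Fin (K - 1) → Fin K → ℂ,
      (∀ i, ∑ r, c i r = 0) ∧
      (∀ i j, ∑ r, (starRingEnd ℂ) (c i r) * c j r = if i = j then 1 else 0) := by
  classical
  let φ : EuclideanSpace ℂ (Fin K) →ₗ[ℂ] ℂ :=
    { toFun := fun x => ∑ r, x r
      map_add' := by intro x y; simp [Finset.sum_add_distrib]
      map_smul' := by intro m x; simp [Finset.mul_sum] }
  have hsurj : Function.Surjective φ := by
    intro z
    refine ⟨(EuclideanSpace.single (⟨0, hK⟩ : Fin K) z), ?_⟩
    simp [φ, EuclideanSpace.single_apply]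
  have hrank : Module.finrank ℂ (LinearMap.ker φ) = K - 1 := by
    have h1 := LinearMap.finrank_range_add_finrank_ker φ
    rw [finrank_euclideanSpace_fin] at h1
    rw [LinearMap.range_eq_top.mpr hsurj] at h1
    simp [finrank_top] at h1
    omega
  let b := stdOrthonormalBasis ℂ (LinearMap.ker φ)
  let e : Fin (K - 1) → Fin (Module.finrank ℂ (LinearMap.ker φ)) :=
    fun i => Fin.cast hrank.symm i
  refine ⟨fun i r => ((b (e i) : EuclideanSpace ℂ (Fin K)) r), ?_, ?_⟩
  · intro i
    have := (b (e i)).2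
    rw [LinearMap.mem_ker] at this
    exact this
  · intro i j
    have horth := orthonormal_iff_ite.mp b.orthonormal (e i) (e j)
    rw [Submodule.coe_inner, PiLp.inner_apply] at horth
    simp only [RCLike.inner_apply] at horth
    have horth' : ∑ r, (starRingEnd ℂ) ((b (e i) : EuclideanSpace ℂ (Fin K)) r) * (b (e j) : EuclideanSpace ℂ (Fin K)) r = if e i = e j then 1 else 0 := by
      rw [← horth]; exact Finset.sum_congr rfl (fun _ _ => mul_comm _ _)
    refine horth'.trans ?_
    have : e i = e j ↔ i = j := by
      constructor
      · intro h; exact Fin.ext (by simpa [e, Fin.cast] using congrArg Fin.val h)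
      · intro h; rw [h]
    simp only [this]

/-- Shift of the subtree below `(0, n)` to the subtree below the `r`-th child of `(a, n+1)`,
as an equivalence of the vertex set. -/
def tauE (K n : ℕ) (a : ℤ) (r : Fin K) : CanV ≃ CanV where
  toFun v := (v.1 - ((K:ℤ)*a + (r:ℤ)) * (K:ℤ)^(n - v.2), v.2)
  invFun v := (v.1 + ((K:ℤ)*a + (r:ℤ)) * (K:ℤ)^(n - v.2), v.2)
  left_inv v := by simp
  right_inv v := by simp

lemma canopy_package {K l : ℕ} (hK : 2 < K) (hl : 2 ≤ l) (E : ℝ) (hE : E ∈ canLamSpec K l)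
    (x : CanV) (hx : x.2 = l) (W : CanV → ℝ) :
    ∃ Ψ : Fin (K - 1) → CanV → ℂ,
      (∀ i, Memℓp (Ψ i) 2) ∧
      (∀ i v, canH K l W (Ψ i) v = ((E + W x : ℝ) : ℂ) * Ψ i v) ∧
      (∀ i j, ∑' v : CanV, (starRingEnd ℂ) (Ψ i v) * Ψ j v = if i = j then 1 else 0) := by
  classical
  have hK0 : 0 < K := by omega
  obtain ⟨ψ₀, hψ0ne, hsupp₀, heig₀⟩ := hE
  set n := l - 1 with hn
  set a := x.1 with ha
  have hxal : x = (a, l) := by rw [ha, ← hx]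
  -- finiteness of the block
  have hfin : (canLam K n ((0:ℤ), n)).Finite := by
    apply Set.Finite.subset (Set.Finite.prod (Set.finite_Icc (0:ℤ) ((K:ℤ)^n)) (Set.finite_Iic n))
    intro v hv
    rw [mem_canLam_iff_s3 hK0] at hv
    obtain ⟨h1, h2, h3⟩ := hv
    constructor
    · constructor
      · exact h2
      · have : (K:ℤ)^(n - v.2) ≤ (K:ℤ)^n :=
          pow_le_pow_right₀ (by exact_mod_cast hK0) (Nat.sub_le n v.2)
        exact le_of_lt (lt_of_lt_of_le h3 this)
    · exact h1
  set F₀ := hfin.toFinset with hF₀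
  -- normalisation
  set n2 : ℝ := ∑ v ∈ F₀, Complex.normSq (ψ₀ v) with hn2
  have hn2pos : 0 < n2 := by
    obtain ⟨v₀, hv₀⟩ : ∃ v₀, ψ₀ v₀ ≠ 0 := by
      by_contra h
      push_neg at h
      exact hψ0ne (funext h)
    have hv₀mem : v₀ ∈ F₀ := by
      rw [hF₀, Set.Finite.mem_toFinset]
      by_contra h
      exact hv₀ (hsupp₀ v₀ h)
    apply Finset.sum_pos' (fun v _ => Complex.normSq_nonneg _)
    exact ⟨v₀, hv₀mem, Complex.normSq_pos.mpr hv₀⟩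
  set s0 : ℝ := Real.sqrt n2 with hs0
  have hs0pos : 0 < s0 := Real.sqrt_pos.mpr hn2pos
  set ψ : CanV → ℂ := fun v => ((s0⁻¹ : ℝ) : ℂ) * ψ₀ v with hψ
  have hsupp : ∀ v ∉ canLam K n ((0:ℤ), n), ψ v = 0 := by
    intro v hv; rw [hψ]; simp [hsupp₀ v hv]
  have heig : ∀ v ∈ canLam K n ((0:ℤ), n), canAdjOp K ψ v = (E:ℂ) * ψ v := by
    intro v hv
    have h1 : canAdjOp K ψ v = ((s0⁻¹ : ℝ) : ℂ) * canAdjOp K ψ₀ v := by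
      rw [canAdjOp, canAdjOp, hψ]
      simp only [mul_add, Finset.mul_sum]
      congr 1
      split <;> simp [Finset.mul_sum]
    rw [h1, heig₀ v hv, hψ]
    ring
  have hnorm : ∑ v ∈ F₀, Complex.normSq (ψ v) = 1 := by
    have : ∀ v, Complex.normSq (ψ v) = n2⁻¹ * Complex.normSq (ψ₀ v) := by
      intro v
      rw [hψ]
      simp only [Complex.normSq_mul, Complex.normSq_ofReal]
      congr 1
      rw [← mul_inv, hs0, Real.mul_self_sqrt hn2pos.le]
    simp only [this, ← Finset.mul_sum]
    rw [← hn2, inv_mul_cancel₀ hn2pos.ne']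
  have hψoff : ∀ w : CanV, w ∉ F₀ → ψ w = 0 := by
    intro w hw
    apply hsupp
    rw [hF₀, Set.Finite.mem_toFinset] at hw
    exact hw
  obtain ⟨c, hc0, hcorth⟩ := exists_ortho_sum_zero K hK0
  refine ⟨fun i v => ∑ r : Fin K, c i r * ψ (tauE K n a r v), ?_, ?_, ?_⟩
  · -- ℓ²
    intro i
    apply memℓp_gen
    set S : Set CanV := ⋃ r : Fin K, (tauE K n a r) ⁻¹' (canLam K n ((0:ℤ), n)) with hS
    have hSfin : S.Finite :=
      Set.finite_iUnion (fun r => hfin.preimage ((tauE K n a r).injective.injOn))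
    apply summable_of_ne_finset_zero (s := hSfin.toFinset)
    intro v hv
    rw [Set.Finite.mem_toFinset, hS, Set.mem_iUnion] at hv
    push_neg at hv
    have hzero : ∑ r : Fin K, c i r * ψ (tauE K n a r v) = 0 := by
      apply Finset.sum_eq_zero
      intro r _
      rw [hsupp _ (hv r), mul_zero]
    show ‖∑ r : Fin K, c i r * ψ (tauE K n a r v)‖ ^ ((2:ENNReal)).toReal = 0
    rw [hzero]
    simp
  · -- eigenvalue equation
    intro i v
    have := eigen_main hK hl E ψ hsupp heig a (c i) (hc0 i) W v
    rw [hxal]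
    exact this
  · -- orthonormality
    intro i j
    have hdisj : ∀ (v : CanV) (r r' : Fin K), r ≠ r' →
        ψ (tauE K n a r v) = 0 ∨ ψ (tauE K n a r' v) = 0 := by
      intro v r r' hrr
      by_contra h
      push_neg at h
      obtain ⟨h1, h2⟩ := h
      have hb1 := (mem_canLam_iff_s3 hK0 n _).mp (by
        by_contra hb; exact h1 (hsupp _ hb))
      have hb2 := (mem_canLam_iff_s3 hK0 n _).mp (by
        by_contra hb; exact h2 (hsupp _ hb))
      simp only [tauE, Equiv.coe_fn_mk] at hb1 hb2
      obtain ⟨-, c1, c2⟩ := hb1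
      obtain ⟨-, c3, c4⟩ := hb2
      have hP : (0:ℤ) < (K:ℤ)^(n - v.2) := by positivity
      have hmr : ((K:ℤ)*a + (r:ℤ)) = ((K:ℤ)*a + (r':ℤ)) := by
        have e1 : (((K:ℤ)*a + (r:ℤ)) - ((K:ℤ)*a + (r':ℤ))) * (K:ℤ)^(n - v.2)
            < 1 * (K:ℤ)^(n - v.2) := by nlinarith
        have e2 : (((K:ℤ)*a + (r':ℤ)) - ((K:ℤ)*a + (r:ℤ))) * (K:ℤ)^(n - v.2)
            < 1 * (K:ℤ)^(n - v.2) := by nlinarith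
        have e1' := (mul_lt_mul_iff_left₀ hP).mp e1
        have e2' := (mul_lt_mul_iff_left₀ hP).mp e2
        omega
      have : (r:ℤ) = (r':ℤ) := by omega
      exact hrr (Fin.ext (by exact_mod_cast this))
    have hpt : ∀ v : CanV,
        (starRingEnd ℂ) (∑ r : Fin K, c i r * ψ (tauE K n a r v))
          * (∑ r : Fin K, c j r * ψ (tauE K n a r v))
        = ∑ r : Fin K, ((starRingEnd ℂ) (c i r) * c j r)
            * ((starRingEnd ℂ) (ψ (tauE K n a r v)) * ψ (tauE K n a r v)) := by
      intro v
      rw [map_sum, Finset.sum_mul_sum]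
      apply Finset.sum_congr rfl
      intro r _
      rw [Finset.sum_eq_single r]
      · rw [map_mul]; ring
      · intro r' _ hrr
        rcases hdisj v r r' (fun h => hrr h.symm) with h | h
        · rw [h]; simp
        · rw [h]; simp
      · intro h; exact absurd (Finset.mem_univ r) h
    rw [tsum_congr hpt]
    have hsummand : ∀ r : Fin K, Summable (fun v : CanV =>
        ((starRingEnd ℂ) (c i r) * c j r)
          * ((starRingEnd ℂ) (ψ (tauE K n a r v)) * ψ (tauE K n a r v))) := by
      intro r
      apply summable_of_ne_finset_zero (s := (hfin.preimage ((tauE K n a r).injective.injOn)).toFinset)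
      intro v hv
      rw [Set.Finite.mem_toFinset, Set.mem_preimage] at hv
      rw [hsupp _ hv]
      simp
    rw [Summable.tsum_finsetSum (fun r _ => hsummand r)]
    have hone : ∀ r : Fin K,
        ∑' v : CanV, ((starRingEnd ℂ) (c i r) * c j r)
          * ((starRingEnd ℂ) (ψ (tauE K n a r v)) * ψ (tauE K n a r v))
        = (starRingEnd ℂ) (c i r) * c j r := by
      intro r
      rw [tsum_mul_left]
      have hre := Equiv.tsum_eq (tauE K n a r) (fun w => (starRingEnd ℂ) (ψ w) * ψ w)
      rw [hre]
      have : ∑' w : CanV, (starRingEnd ℂ) (ψ w) * ψ w = 1 := by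
        rw [tsum_eq_sum (s := F₀) (fun w hw => by rw [hψoff w hw]; simp)]
        have : ∀ w, (starRingEnd ℂ) (ψ w) * ψ w = ((Complex.normSq (ψ w) : ℝ) : ℂ) := by
          intro w; rw [Complex.normSq_eq_conj_mul_self]
        simp only [this]
        rw [← Complex.ofReal_sum, hnorm, Complex.ofReal_one]
      rw [this, mul_one]
    rw [Finset.sum_congr rfl (fun r _ => hone r)]
    exact hcorth i j

section prob
variable {Ω : Type*} [MeasurableSpace Ω] (P : Measure Ω) [IsProbabilityMeasure P]
  (μ : Measure ℝ) [IsProbabilityMeasure μ] (l : ℕ)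
  (ω : CanV → Ω → ℝ)

lemma mem_canN (m : ℤ) : ((m, l) : CanV) ∈ canN l := rfl

lemma core_event (hmeas : ∀ x, Measurable (ω x))
    (hlaw : ∀ x ∈ canN l, Measure.map (ω x) P = μ)
    (hindep : iIndepFun (fun x : canN l => ω x) P)
    (U : Set ℝ) (hU : MeasurableSet U) (hμU : μ U ≠ 0) :
    P {ρ | ∀ m : ℤ, ω ((m:ℤ), l) ρ ∉ U} = 0 := by
  classical
  set X : ℕ → canN l := fun i => ⟨(((i:ℤ)), l), mem_canN l i⟩ with hX
  have hXinj : Function.Injective X := by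
    intro i j h
    have h2 : ((i:ℤ), l) = (((j:ℤ)), l) := congrArg Subtype.val h
    have h3 : (i:ℤ) = (j:ℤ) := by
      have := Prod.ext_iff.mp h2
      simpa using this.1
    exact_mod_cast h3
  set A : Set Ω := {ρ | ∀ m : ℤ, ω ((m:ℤ), l) ρ ∉ U} with hA
  have hq : P ((ω ((0:ℤ), l)) ⁻¹' Uᶜ) = μ Uᶜ → True := fun _ => trivial
  have hfac : ∀ x : canN l, P ((ω x) ⁻¹' Uᶜ) = μ Uᶜ := by
    intro x
    rw [← hlaw x x.2, Measure.map_apply (hmeas x) hU.compl]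
  have hbound : ∀ N : ℕ, P A ≤ (μ Uᶜ) ^ N := by
    intro N
    have hsub : A ⊆ ⋂ x ∈ (Finset.range N).image X, (fun x : canN l => ω x) x ⁻¹' Uᶜ := by
      intro ρ hρ
      simp only [Set.mem_iInter, Finset.mem_image, Finset.mem_range]
      rintro x ⟨i, -, rfl⟩
      exact hρ i
    have hind := hindep.measure_inter_preimage_eq_mul ((Finset.range N).image X)
      (sets := fun _ => Uᶜ) (fun i _ => hU.compl)
    calc P A ≤ P (⋂ x ∈ (Finset.range N).image X, (fun x : canN l => ω x) x ⁻¹' Uᶜ) :=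
          measure_mono hsub
      _ = ∏ x ∈ (Finset.range N).image X, P ((ω x) ⁻¹' Uᶜ) := hind
      _ = ∏ x ∈ (Finset.range N).image X, μ Uᶜ := by
          exact Finset.prod_congr rfl (fun x _ => hfac x)
      _ = (μ Uᶜ) ^ N := by
          rw [Finset.prod_const, Finset.card_image_of_injective _ hXinj, Finset.card_range]
  have hlt : μ Uᶜ < 1 := by
    rw [prob_compl_eq_one_sub hU]
    exact ENNReal.sub_lt_self ENNReal.one_ne_top one_ne_zero hμU
  have hlim := ENNReal.tendsto_pow_atTop_nhds_zero_of_lt_one hlt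
  have : P A ≤ 0 := ge_of_tendsto hlim (Filter.Eventually.of_forall hbound)
  exact le_antisymm this (zero_le)

lemma ae_dense (hmeas : ∀ x, Measurable (ω x))
    (hlaw : ∀ x ∈ canN l, Measure.map (ω x) P = μ)
    (hindep : iIndepFun (fun x : canN l => ω x) P) :
    ∀ᵐ ρ ∂P, ∀ t ∈ measSupport μ, ∀ ε > (0:ℝ), ∃ m : ℤ, |ω ((m:ℤ), l) ρ - t| < ε := by
  have hae : ∀ᵐ ρ ∂P, ∀ p : ℚ × ℚ,
      μ (Metric.ball ((p.1:ℝ)) ((p.2:ℝ))) ≠ 0 →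
        ∃ m : ℤ, ω ((m:ℤ), l) ρ ∈ Metric.ball ((p.1:ℝ)) ((p.2:ℝ)) := by
    rw [MeasureTheory.ae_all_iff]
    intro p
    by_cases hμp : μ (Metric.ball ((p.1:ℝ)) ((p.2:ℝ))) = 0
    · exact Filter.Eventually.of_forall (fun ρ h => absurd hμp h)
    · have h0 := core_event P μ l ω hmeas hlaw hindep _ measurableSet_ball hμp
      rw [ae_iff]
      refine measure_mono_null ?_ h0
      intro ρ hρ m hmem
      exact hρ (fun _ => ⟨m, hmem⟩)
  filter_upwards [hae] with ρ hρ
  intro t ht ε hε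
  obtain ⟨δ, hδ0, hδε⟩ := exists_rat_btwn (half_pos hε)
  obtain ⟨q, hq⟩ := exists_rat_near t hδ0
  have ht' : t ∈ Metric.ball ((q:ℝ)) ((δ:ℝ)) := by
    rw [Metric.mem_ball, Real.dist_eq]; exact hq
  have hμpos : μ (Metric.ball ((q:ℝ)) ((δ:ℝ))) ≠ 0 :=
    (ht _ Metric.isOpen_ball ht').ne'
  obtain ⟨m, hm⟩ := hρ (q, δ) hμpos
  rw [Metric.mem_ball, Real.dist_eq] at hm
  refine ⟨m, ?_⟩
  have h1 : |ω ((m:ℤ), l) ρ - t| ≤ |ω ((m:ℤ), l) ρ - (q:ℝ)| + |(q:ℝ) - t| := abs_sub_le _ _ _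
  have h2 : |(q:ℝ) - t| = |t - (q:ℝ)| := abs_sub_comm _ _
  linarith
end prob

end canopyAux

/-- Let `K > 2`, `l ≥ 2` and let `(ω_x)_{x∈𝒩}` be i.i.d. real random
variables whose common law `μ` is absolutely continuous (w.r.t. Lebesgue measure).  Then
almost surely `σ(Δ_{l-1}) + supp(μ)` is contained in the pure point spectrum of `H^ω_𝒯`
(the closure of its set of eigenvalues), and almost surely every eigenvalue of the form
`E + ω_x` with `E ∈ σ(Δ_{l-1})` and `x ∈ 𝒱_l` has multiplicity at least `K - 1`. -/
theorem canopy_pp_spectrum_multiplicity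
    (K l : ℕ) (hK : 2 < K) (hl : 2 ≤ l)
    {Ω : Type*} [MeasurableSpace Ω] (P : Measure Ω) [IsProbabilityMeasure P]
    (μ : Measure ℝ) [IsProbabilityMeasure μ]
    (hac : μ ≪ volume)
    (ω : CanV → Ω → ℝ)
    (hmeas : ∀ x, Measurable (ω x))
    (hlaw : ∀ x ∈ canN l, Measure.map (ω x) P = μ)
    (hindep : iIndepFun (fun x : canN l => ω x) P) :
    ∀ᵐ ρ ∂P,
      (∀ E ∈ canLamSpec K l, ∀ t ∈ measSupport μ,
        E + t ∈ closure {s : ℝ | ∃ Ψ : CanV → ℂ, Ψ ≠ 0 ∧ Memℓp Ψ 2 ∧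
          ∀ v, canH K l (fun y => ω y ρ) Ψ v = (s : ℂ) * Ψ v}) ∧
      (∀ E ∈ canLamSpec K l, ∀ x : CanV, x.2 = l →
        ∃ Ψ : Fin (K - 1) → CanV → ℂ,
          (∀ i, Memℓp (Ψ i) 2) ∧
          (∀ i v, canH K l (fun y => ω y ρ) (Ψ i) v = ((E + ω x ρ : ℝ) : ℂ) * Ψ i v) ∧
          (∀ i j, ∑' v : CanV, (starRingEnd ℂ) (Ψ i v) * Ψ j v
            = if i = j then 1 else 0)) := by
  
  filter_upwards [ae_dense P μ l ω hmeas hlaw hindep] with ρ hρ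
  have hpack := fun (E : ℝ) (hE : E ∈ canLamSpec K l) (x : CanV) (hx : x.2 = l) =>
    canopy_package hK hl E hE x hx (fun y => ω y ρ)
  refine ⟨?_, hpack⟩
  intro E hE t ht
  rw [Metric.mem_closure_iff]
  intro ε hε
  obtain ⟨m, hm⟩ := hρ t ht ε hε
  obtain ⟨Ψ, hl2, heq, horth⟩ := hpack E hE ((m:ℤ), l) rfl
  have hi : 0 < K - 1 := by omega
  refine ⟨E + ω ((m:ℤ), l) ρ, ⟨Ψ ⟨0, hi⟩, ?_, hl2 _, heq _⟩, ?_⟩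
  · intro h0
    have h1 := horth ⟨0, hi⟩ ⟨0, hi⟩
    rw [if_pos rfl, h0] at h1
    simp at h1
  · rw [Real.dist_eq, show E + t - (E + ω ((m:ℤ), l) ρ) = -(ω ((m:ℤ), l) ρ - t) by ring, abs_neg]
    exact hm
end

section
/- For any family (φ_g)_{g∈G} with each φ_g an automorphism of ℋ fixing v_{−n}, …, v_{−1}, v_1, …, v_n, the map Θ((φ_g)) : 𝒱_G → 𝒱_G defined by Θ((φ_g))((v,h)) = (φ_h(v), h) is a graph automorphism of ℋ_G, and for every ω : G → ℝ the associated unitary U_{Θ((φ_g))} satisfies U_{Θ((φ_g))} H^ω_G U_{Θ((φ_g))}* = H^ω_G. Moreover Θ is an injective group homomorphism from ∏_{g∈G} Aut(ℋ | {v_{−n},…,v_n}) into Aut(ℋ_G). -/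
open scoped Classical

/-!
Cayley-type graph setup.  Given a finite undirected graph `ℋ` on `V`, distinguished
vertices `v_i = vpos i` and `v_{-i} = vneg i` (`1 ≤ i ≤ n`), and a group `G` generated by
`g_i = gen i`, the graph `ℋ_G` on `𝒱_G = V × G` has the fibre edges `{(v,g),(w,g)}` for
`{v,w} ∈ ℰ` and the cross edges `{(v_{-i},g),(v_i, g·gᵢ)}`.
-/

/-- The base relation generating the edges of `ℋ_G`. -/
def cayRel {V G : Type*} [Group G] (H : SimpleGraph V) {n : ℕ}
    (vpos vneg : Fin n → V) (gen : Fin n → G) (p q : V × G) : Prop :=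
  (p.2 = q.2 ∧ H.Adj p.1 q.1) ∨ ∃ i : Fin n, p.1 = vneg i ∧ q.1 = vpos i ∧ q.2 = p.2 * gen i

/-- The Cayley-type graph `ℋ_G` on `V × G`. -/
def cayGraph {V G : Type*} [Group G] (H : SimpleGraph V) {n : ℕ}
    (vpos vneg : Fin n → V) (gen : Fin n → G) : SimpleGraph (V × G) :=
  SimpleGraph.fromRel (cayRel H vpos vneg gen)

/-- The adjacency operator `Δ_{ℋ_G}` of `ℋ_G`: `(Δ u)(p) = Σ_{q adjacent to p} u(q)`. -/
noncomputable def cayAdjOp {V G : Type*} [Group G] (H : SimpleGraph V) {n : ℕ}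
    (vpos vneg : Fin n → V) (gen : Fin n → G) (u : V × G → ℂ) (p : V × G) : ℂ :=
  ∑' q : V × G, if (cayGraph H vpos vneg gen).Adj p q then u q else 0

/-- The Anderson-type operator `H^ω_G = Δ_{ℋ_G} + Σ_{g∈G} ω_g P_g`, where `P_g` is the
coordinate projection onto `V × {g}`. -/
noncomputable def cayH {V G : Type*} [Group G] (H : SimpleGraph V) {n : ℕ}
    (vpos vneg : Fin n → V) (gen : Fin n → G) (ω : G → ℝ) (u : V × G → ℂ) (p : V × G) : ℂ :=
  cayAdjOp H vpos vneg gen u p + (ω p.2 : ℂ) * u p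

/-- The map `Θ((φ_g)) : (v,h) ↦ (φ_h(v), h)` on `𝒱_G = V × G`. -/
def thetaMap {V G : Type*} (Φ : G → (V ≃ V)) (p : V × G) : V × G := (Φ p.2 p.1, p.2)

/-- The inverse of `Θ((φ_g))`, i.e. `Θ((φ_g⁻¹))`. -/
def thetaInv {V G : Type*} (Φ : G → (V ≃ V)) (p : V × G) : V × G := ((Φ p.2).symm p.1, p.2)

/-- `thetaMap` as an equivalence. -/
def thetaEquiv {V G : Type*} (Φ : G → (V ≃ V)) : (V × G) ≃ (V × G) where
  toFun := thetaMap Φ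
  invFun := thetaInv Φ
  left_inv p := by simp [thetaMap, thetaInv]
  right_inv p := by simp [thetaMap, thetaInv]

lemma cayRel_theta {V G : Type*} [Group G] (H : SimpleGraph V) {n : ℕ}
    (vpos vneg : Fin n → V) (gen : Fin n → G) (Φ : G → (V ≃ V))
    (hadj : ∀ g a b, H.Adj a b ↔ H.Adj (Φ g a) (Φ g b))
    (hfix : ∀ g i, Φ g (vpos i) = vpos i ∧ Φ g (vneg i) = vneg i)
    (p q : V × G) :
    cayRel H vpos vneg gen (thetaMap Φ p) (thetaMap Φ q) ↔
      cayRel H vpos vneg gen p q := by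
  obtain ⟨a, g⟩ := p
  obtain ⟨b, h⟩ := q
  simp only [cayRel, thetaMap]
  constructor
  · rintro (⟨rfl, hab⟩ | ⟨i, h1, h2, h3⟩)
    · exact Or.inl ⟨rfl, (hadj g a b).2 hab⟩
    · refine Or.inr ⟨i, ?_, ?_, h3⟩
      · have := (hfix g i).2
        exact (Φ g).injective (h1.trans this.symm)
      · have := (hfix h i).1
        exact (Φ h).injective (h2.trans this.symm)
  · rintro (⟨rfl, hab⟩ | ⟨i, rfl, rfl, h3⟩)
    · exact Or.inl ⟨rfl, (hadj g a b).1 hab⟩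
    · exact Or.inr ⟨i, (hfix g i).2, (hfix h i).1, h3⟩

lemma cayAdj_theta {V G : Type*} [Group G] (H : SimpleGraph V) {n : ℕ}
    (vpos vneg : Fin n → V) (gen : Fin n → G) (Φ : G → (V ≃ V))
    (hadj : ∀ g a b, H.Adj a b ↔ H.Adj (Φ g a) (Φ g b))
    (hfix : ∀ g i, Φ g (vpos i) = vpos i ∧ Φ g (vneg i) = vneg i)
    (p q : V × G) :
    (cayGraph H vpos vneg gen).Adj (thetaMap Φ p) (thetaMap Φ q) ↔
      (cayGraph H vpos vneg gen).Adj p q := by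
  simp only [cayGraph, SimpleGraph.fromRel_adj]
  rw [cayRel_theta H vpos vneg gen Φ hadj hfix p q,
      cayRel_theta H vpos vneg gen Φ hadj hfix q p]
  constructor
  · rintro ⟨hne, hr⟩
    exact ⟨fun e => hne (by rw [e]), hr⟩
  · rintro ⟨hne, hr⟩
    exact ⟨fun e => hne ((thetaEquiv Φ).injective e), hr⟩


/-- For any family `(φ_g)_{g∈G}` of automorphisms of `ℋ` fixing the
distinguished vertices `v_{-n},…,v_{-1},v_1,…,v_n`, the map
`Θ((φ_g))((v,h)) = (φ_h(v),h)` is a graph automorphism of `ℋ_G`, and the associated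
unitary `U_{Θ((φ_g))}` satisfies `U_Θ H^ω_G U_Θ* = H^ω_G` for every `ω : G → ℝ`
(evaluated on an arbitrary `u` at an arbitrary point, using `U_Θ* = U_{Θ⁻¹}`).
Moreover `Θ` is an injective group homomorphism from
`∏_{g∈G} Aut(ℋ | {v_{-n},…,v_n})` into `Aut(ℋ_G)` (multiplication being composition). -/
theorem cayley_theta_automorphism {V G : Type*} [Group G] [Fintype V]
    (H : SimpleGraph V) {n : ℕ} (vpos vneg : Fin n → V) (gen : Fin n → G)
    (hgen : Subgroup.closure (Set.range gen) = ⊤) :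
    (∀ Φ : G → (V ≃ V),
      (∀ g a b, H.Adj a b ↔ H.Adj (Φ g a) (Φ g b)) →
      (∀ g i, Φ g (vpos i) = vpos i ∧ Φ g (vneg i) = vneg i) →
      Function.Bijective (thetaMap Φ) ∧
      (∀ p q, (cayGraph H vpos vneg gen).Adj p q ↔
        (cayGraph H vpos vneg gen).Adj (thetaMap Φ p) (thetaMap Φ q)) ∧
      (∀ (ω : G → ℝ) (u : V × G → ℂ) (p : V × G),
        cayH H vpos vneg gen ω (fun q => u (thetaInv Φ q)) (thetaMap Φ p)
          = cayH H vpos vneg gen ω u p)) ∧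
    (∀ Φ Φ' : G → (V ≃ V),
      (∀ g a b, H.Adj a b ↔ H.Adj (Φ g a) (Φ g b)) →
      (∀ g i, Φ g (vpos i) = vpos i ∧ Φ g (vneg i) = vneg i) →
      (∀ g a b, H.Adj a b ↔ H.Adj (Φ' g a) (Φ' g b)) →
      (∀ g i, Φ' g (vpos i) = vpos i ∧ Φ' g (vneg i) = vneg i) →
      (∀ p, thetaMap (fun g => (Φ' g).trans (Φ g)) p = thetaMap Φ (thetaMap Φ' p)) ∧
      (thetaMap Φ = thetaMap Φ' → Φ = Φ')) := by
  constructor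
  · intro Φ hadj hfix
    refine ⟨(thetaEquiv Φ).bijective, fun p q =>
      (cayAdj_theta H vpos vneg gen Φ hadj hfix p q).symm, ?_⟩
    intro ω u p
    unfold cayH cayAdjOp
    have h2 : (thetaMap Φ p).2 = p.2 := rfl
    have h3 : thetaInv Φ (thetaMap Φ p) = p := (thetaEquiv Φ).left_inv p
    simp only [h2, h3]
    congr 1
    rw [← Equiv.tsum_eq (thetaEquiv Φ)
      (fun q => if (cayGraph H vpos vneg gen).Adj (thetaMap Φ p) q
        then u (thetaInv Φ q) else 0)]
    refine tsum_congr fun q => ?_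
    rw [show ((thetaEquiv Φ) q) = thetaMap Φ q from rfl,
        cayAdj_theta H vpos vneg gen Φ hadj hfix p q]
    simp [thetaInv, thetaMap]
  · intro Φ Φ' _ _ _ _
    refine ⟨fun p => rfl, fun hth => ?_⟩
    funext g
    ext v
    have := congrArg (fun f => (f (v, g)).1) hth
    simpa [thetaMap] using this
end

section
/- Suppose E₀ is an eigenvalue of the adjacency matrix Δ_ℋ of the finite graph ℋ admitting orthonormal eigenvectors ψ_1, …, ψ_l (l ≥ 2) that all vanish at vertices x_1, …, x_m ∈ 𝒱, and suppose the distinguished vertices of the construction satisfy v_i = x_{π(i)} for some map π : {−n,…,n} → {1,…,m}. Then for every ω : G → ℝ and every g ∈ G, the vectors Ψ^{g,i} ∈ ℓ²(𝒱_G) defined by Ψ^{g,i}((v,h)) = ψ_i(v) if h = g and 0 otherwise (1 ≤ i ≤ l) are orthonormal eigenvectors of H^ω_G with eigenvalue E₀ + ω_g; in particular E₀ + ω_g is an eigenvalue of H^ω_G of multiplicity at least l. -/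
open scoped Classical

/-- The adjacency matrix `Δ_ℋ` of the finite graph `ℋ`, acting on functions `V → ℂ`. -/
noncomputable def adjOpC {V : Type*} [Fintype V] (H : SimpleGraph V) (u : V → ℂ) (v : V) : ℂ :=
  ∑ w : V, if H.Adj v w then u w else 0

/-- The vector `Ψ^{g,i}` supported in the fibre `V × {g}`:
`Ψ^{g,i}((v,h)) = ψ_i(v)` if `h = g` and `0` otherwise. -/
noncomputable def fibVec {V G : Type*} (ψ : V → ℂ) (g : G) (p : V × G) : ℂ :=
  if p.2 = g then ψ p.1 else 0

lemma tsum_fiber {V G : Type*} [Fintype V] (g : G) (f : V × G → ℂ)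
    (hf : ∀ p : V × G, p.2 ≠ g → f p = 0) : ∑' p : V × G, f p = ∑ v : V, f (v, g) := by
  classical
  rw [tsum_eq_sum (s := Finset.univ.image fun v : V => (v, g))
      (fun p hp => hf p (by
        intro hpg
        exact hp (Finset.mem_image.2 ⟨p.1, Finset.mem_univ _, by
          cases p with | mk a b => simp_all⟩)))]
  rw [Finset.sum_image (fun a _ b _ h => (Prod.mk.injEq _ _ _ _ ▸ h).1)]

lemma summable_fiber {V G : Type*} [Fintype V] (g : G) (f : V × G → ℝ)
    (hf : ∀ p : V × G, p.2 ≠ g → f p = 0) : Summable f := by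
  classical
  apply summable_of_ne_finset_zero (s := Finset.univ.image fun v : V => (v, g))
  intro p hp
  exact hf p (by
    intro hpg
    exact hp (Finset.mem_image.2 ⟨p.1, Finset.mem_univ _, by
      cases p with | mk a b => simp_all⟩))

/-- Suppose `E₀` is an eigenvalue of `Δ_ℋ` admitting orthonormal
eigenvectors `ψ_1,…,ψ_l` (`l ≥ 2`) all vanishing at `x_1,…,x_m ∈ V`, and the distinguished
vertices satisfy `v_i = x_{π(i)}`.  Then for every `ω : G → ℝ` and `g ∈ G`, the vectors
`Ψ^{g,i}` are orthonormal `ℓ²`-eigenvectors of `H^ω_G` with eigenvalue `E₀ + ω_g`; in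
particular `E₀ + ω_g` is an eigenvalue of `H^ω_G` of multiplicity at least `l`. -/
theorem cayley_fiber_eigenvectors {V G : Type*} [Group G] [Fintype V]
    (H : SimpleGraph V) {n : ℕ} (vpos vneg : Fin n → V) (gen : Fin n → G)
    (hgen : Subgroup.closure (Set.range gen) = ⊤)
    {l m : ℕ} (hl : 2 ≤ l)
    (E₀ : ℝ) (ψ : Fin l → V → ℂ)
    (heig : ∀ i v, adjOpC H (ψ i) v = (E₀ : ℂ) * ψ i v)
    (horth : ∀ i j, ∑ v : V, (starRingEnd ℂ) (ψ i v) * ψ j v = if i = j then 1 else 0)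
    (x : Fin m → V)
    (hvan : ∀ i j, ψ i (x j) = 0)
    (hpos : ∀ i : Fin n, ∃ j : Fin m, vpos i = x j)
    (hneg : ∀ i : Fin n, ∃ j : Fin m, vneg i = x j)
    (ω : G → ℝ) (g : G) :
    (∀ i, Memℓp (fibVec (ψ i) g) 2) ∧
    (∀ i p, cayH H vpos vneg gen ω (fibVec (ψ i) g) p
      = ((E₀ + ω g : ℝ) : ℂ) * fibVec (ψ i) g p) ∧
    (∀ i j, ∑' p : V × G, (starRingEnd ℂ) (fibVec (ψ i) g p) * fibVec (ψ j) g p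
      = if i = j then 1 else 0) := by
  classical
  -- ψ vanishes at distinguished vertices
  have hψpos : ∀ (i : Fin l) (k : Fin n), ψ i (vpos k) = 0 := by
    intro i k; obtain ⟨j, hj⟩ := hpos k; rw [hj]; exact hvan i j
  have hψneg : ∀ (i : Fin l) (k : Fin n), ψ i (vneg k) = 0 := by
    intro i k; obtain ⟨j, hj⟩ := hneg k; rw [hj]; exact hvan i j
  refine ⟨?_, ?_, ?_⟩
  · -- Memℓp
    intro i
    apply memℓp_gen
    apply summable_fiber g
    intro p hp
    simp [fibVec, hp]
  · -- eigenvector equation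
    intro i p
    have key : cayAdjOp H vpos vneg gen (fibVec (ψ i) g) p
        = ∑ w : V, if (cayGraph H vpos vneg gen).Adj p (w, g) then ψ i w else 0 := by
      rw [cayAdjOp, tsum_fiber g]
      · simp [fibVec]
      · intro q hq
        simp [fibVec, hq]
    by_cases hp : p.2 = g
    · obtain ⟨v, h⟩ := p
      simp only at hp
      subst hp
      have hterm : ∀ w : V,
          (if (cayGraph H vpos vneg gen).Adj (v, h) (w, h) then ψ i w else 0)
          = if H.Adj v w then ψ i w else 0 := by
        intro w
        by_cases hw : ψ i w = 0
        · simp [hw]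
        · have hwpos : ∀ k : Fin n, w ≠ vpos k := fun k hk => hw (hk ▸ hψpos i k)
          have hwneg : ∀ k : Fin n, w ≠ vneg k := fun k hk => hw (hk ▸ hψneg i k)
          congr 1
          rw [cayGraph, SimpleGraph.fromRel_adj, eq_iff_iff]
          constructor
          · rintro ⟨hne, hrel | hrel⟩
            · rcases hrel with ⟨-, hadj⟩ | ⟨k, -, hk, -⟩
              · exact hadj
              · exact absurd hk (hwpos k)
            · rcases hrel with ⟨-, hadj⟩ | ⟨k, hk, -, -⟩
              · exact hadj.symm
              · exact absurd hk (hwneg k)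
          · intro hadj
            exact ⟨by simp [hadj.ne], Or.inl (Or.inl ⟨rfl, hadj⟩)⟩
      rw [cayH, key]
      simp only [hterm]
      have : (∑ w : V, if H.Adj v w then ψ i w else 0) = adjOpC H (ψ i) v := rfl
      rw [this, heig]
      simp [fibVec]
      push_cast
      ring
    · -- off-fibre: everything vanishes
      have hzero : ∀ w : V,
          (if (cayGraph H vpos vneg gen).Adj p (w, g) then ψ i w else 0) = 0 := by
        intro w
        by_cases hadj : (cayGraph H vpos vneg gen).Adj p (w, g)
        · rw [if_pos hadj]
          rw [cayGraph, SimpleGraph.fromRel_adj] at hadj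
          rcases hadj.2 with hrel | hrel
          · rcases hrel with ⟨h2, -⟩ | ⟨k, -, hk, -⟩
            · exact absurd h2 hp
            · have hw : w = vpos k := hk
              rw [hw]; exact hψpos i k
          · rcases hrel with ⟨h2, -⟩ | ⟨k, hk, -, -⟩
            · exact absurd h2.symm hp
            · have hw : w = vneg k := hk
              rw [hw]; exact hψneg i k
        · exact if_neg hadj
      rw [cayH, key]
      simp only [hzero, Finset.sum_const_zero]
      simp [fibVec, hp]
  · -- orthonormality
    intro i j
    rw [tsum_fiber g _ (fun p hp => by simp [fibVec, hp])]
    simpa [fibVec] using horth i j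
end

section
/- Suppose E₀ is an eigenvalue of the adjacency matrix Δ_ℋ of the finite graph ℋ admitting orthonormal eigenvectors ψ_1, …, ψ_l (l ≥ 2) that all vanish at vertices x_1, …, x_m ∈ 𝒱, that the distinguished vertices satisfy v_i = x_{π(i)} for some map π : {−n,…,n} → {1,…,m}, that G is infinite, and that (ω_g)_{g∈G} are i.i.d. real random variables with absolutely continuous common law μ. Then almost surely E₀ + supp(μ) is contained in the pure point spectrum of H^ω_G (the closure of its set of eigenvalues), and almost surely each eigenvalue E₀ + ω_g, g ∈ G, has multiplicity at least l. -/
open scoped Classical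

open MeasureTheory ProbabilityTheory

lemma tsum_fiber_eq {V G : Type*} [Fintype V] (g : G) (f : V × G → ℂ)
    (hf : ∀ q : V × G, q.2 ≠ g → f q = 0) :
    ∑' q : V × G, f q = ∑ w : V, f (w, g) := by
  rw [tsum_eq_sum (s := Finset.univ.image (fun w : V => (w, g)))
      (fun q hq => hf q (fun h2 => hq (by
        simp only [Finset.mem_image, Finset.mem_univ, true_and]
        exact ⟨q.1, by cases q; simp_all⟩)))]
  exact Finset.sum_image (fun a _ b _ hab => (Prod.mk.injEq _ _ _ _).mp hab |>.1)

lemma cayH_fiber {V G : Type*} [Group G] [Fintype V]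
    (H : SimpleGraph V) {n : ℕ} (vpos vneg : Fin n → V) (gen : Fin n → G)
    {l m : ℕ} (E₀ : ℝ) (ψ : Fin l → V → ℂ)
    (heig : ∀ i v, adjOpC H (ψ i) v = (E₀ : ℂ) * ψ i v)
    (x : Fin m → V) (hvan : ∀ i j, ψ i (x j) = 0)
    (hpos : ∀ i : Fin n, ∃ j : Fin m, vpos i = x j)
    (hneg : ∀ i : Fin n, ∃ j : Fin m, vneg i = x j)
    (ωf : G → ℝ) (g : G) (i : Fin l) (p : V × G) :
    cayH H vpos vneg gen ωf (fun q => if q.2 = g then ψ i q.1 else 0) p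
      = ((E₀ + ωf g : ℝ) : ℂ) * (if p.2 = g then ψ i p.1 else 0) := by
  have hadj : cayAdjOp H vpos vneg gen (fun q => if q.2 = g then ψ i q.1 else 0) p
      = if p.2 = g then (E₀ : ℂ) * ψ i p.1 else 0 := by
    rw [cayAdjOp, tsum_fiber_eq g _ (fun q hq => by simp [hq])]
    have hpt : ∀ w : V,
        (if (cayGraph H vpos vneg gen).Adj p (w, g) then
            (if ((w, g) : V × G).2 = g then ψ i w else 0) else 0)
          = if p.2 = g ∧ H.Adj p.1 w then ψ i w else 0 := by
      intro w
      simp only [if_pos rfl]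
      by_cases hw : ψ i w = 0
      · simp [hw]
      · have hwx : ∀ j, w ≠ x j := fun j h => hw (h ▸ hvan i j)
        have hiff : (cayGraph H vpos vneg gen).Adj p (w, g) ↔ p.2 = g ∧ H.Adj p.1 w := by
          simp only [cayGraph, SimpleGraph.fromRel_adj, cayRel]
          constructor
          · rintro ⟨hne, h | h⟩
            · rcases h with ⟨h1, h2⟩ | ⟨k, h1, h2, h3⟩
              · exact ⟨h1, h2⟩
              · obtain ⟨j, hj⟩ := hpos k
                exact absurd (h2.trans hj) (hwx j)
            · rcases h with ⟨h1, h2⟩ | ⟨k, h1, h2, h3⟩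
              · exact ⟨h1.symm, h2.symm⟩
              · obtain ⟨j, hj⟩ := hneg k
                exact absurd (h1.trans hj) (hwx j)
          · rintro ⟨h1, h2⟩
            refine ⟨fun he => ?_, Or.inl (Or.inl ⟨h1, h2⟩)⟩
            rw [he] at h2
            exact H.irrefl h2
        simp [hiff]
    rw [Finset.sum_congr rfl (fun w _ => hpt w)]
    by_cases hp : p.2 = g
    · simp only [hp, true_and, if_pos]
      rw [← heig i p.1, adjOpC]
    · simp [hp]
  rw [cayH, hadj]
  by_cases hp : p.2 = g
  · simp only [hp, if_pos]
    push_cast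
    ring
  · simp [hp]

lemma memℓp_fiber {V G : Type*} [Fintype V] (g : G) (f : V → ℂ) :
    Memℓp (fun q : V × G => if q.2 = g then f q.1 else 0) 2 := by
  apply memℓp_gen
  apply summable_of_ne_finset_zero (s := Finset.univ.image (fun w : V => (w, g)))
  intro q hq
  have h2 : q.2 ≠ g := fun h => hq (by
    simp only [Finset.mem_image, Finset.mem_univ, true_and]
    exact ⟨q.1, by cases q; simp_all⟩)
  simp [h2, Real.zero_rpow]

lemma avoid_null {G Ω : Type*} [Infinite G] [MeasurableSpace Ω]
    (P : Measure Ω) [IsProbabilityMeasure P]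
    (μ : Measure ℝ) [IsProbabilityMeasure μ]
    (ω : G → Ω → ℝ) (hmeas : ∀ g, Measurable (ω g))
    (hlaw : ∀ g, Measure.map (ω g) P = μ)
    (hindep : iIndepFun (fun g => ω g) P)
    (U : Set ℝ) (hU : MeasurableSet U) (hμU : 0 < μ U) :
    P {ρ | ∀ g, ω g ρ ∉ U} = 0 := by
  have key : ∀ N : ℕ, P {ρ | ∀ g, ω g ρ ∉ U} ≤ (1 - μ U) ^ N := by
    intro N
    set e := Infinite.natEmbedding G
    set S : Finset G := (Finset.range N).image e with hS
    have hsub : {ρ | ∀ g, ω g ρ ∉ U} ⊆ ⋂ g ∈ S, (ω g) ⁻¹' Uᶜ := by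
      intro ρ hρ
      simp only [Set.mem_iInter]
      exact fun g _ => hρ g
    calc P {ρ | ∀ g, ω g ρ ∉ U} ≤ P (⋂ g ∈ S, (ω g) ⁻¹' Uᶜ) := measure_mono hsub
      _ = ∏ g ∈ S, P ((ω g) ⁻¹' Uᶜ) :=
          hindep.meas_biInter (fun g _ => ⟨Uᶜ, hU.compl, rfl⟩)
      _ = ∏ g ∈ S, (1 - μ U) := by
          refine Finset.prod_congr rfl fun g _ => ?_
          have h1 : P ((ω g) ⁻¹' Uᶜ) = μ Uᶜ := by
            rw [← hlaw g, Measure.map_apply (hmeas g) hU.compl]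
          rw [h1, measure_compl hU (measure_ne_top μ U), measure_univ]
      _ = (1 - μ U) ^ N := by
          rw [Finset.prod_const, hS,
            Finset.card_image_of_injective _ e.injective, Finset.card_range]
  have hlt : 1 - μ U < 1 :=
    ENNReal.sub_lt_self ENNReal.one_ne_top one_ne_zero hμU.ne'
  have htend : Filter.Tendsto (fun N : ℕ => (1 - μ U) ^ N) Filter.atTop (nhds 0) :=
    ENNReal.tendsto_pow_atTop_nhds_zero_of_lt_one hlt
  have := ge_of_tendsto htend (Filter.Eventually.of_forall key)
  simpa using le_antisymm this zero_le

/-- In the setting of Theorem `cayley_fiber_eigenvectors`, if moreover `G`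
is infinite and `(ω_g)_{g∈G}` are i.i.d. with absolutely continuous common law `μ`, then
almost surely `E₀ + supp(μ)` is contained in the pure point spectrum of `H^ω_G` (the closure
of its set of eigenvalues), and almost surely every eigenvalue `E₀ + ω_g`, `g ∈ G`, has
multiplicity at least `l`. -/
theorem cayley_pp_spectrum_multiplicity {V G : Type*} [Group G] [Infinite G] [Fintype V]
    (H : SimpleGraph V) {n : ℕ} (vpos vneg : Fin n → V) (gen : Fin n → G)
    (hgen : Subgroup.closure (Set.range gen) = ⊤)
    {l m : ℕ} (hl : 2 ≤ l)
    (E₀ : ℝ) (ψ : Fin l → V → ℂ)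
    (heig : ∀ i v, adjOpC H (ψ i) v = (E₀ : ℂ) * ψ i v)
    (horth : ∀ i j, ∑ v : V, (starRingEnd ℂ) (ψ i v) * ψ j v = if i = j then 1 else 0)
    (x : Fin m → V)
    (hvan : ∀ i j, ψ i (x j) = 0)
    (hpos : ∀ i : Fin n, ∃ j : Fin m, vpos i = x j)
    (hneg : ∀ i : Fin n, ∃ j : Fin m, vneg i = x j)
    {Ω : Type*} [MeasurableSpace Ω] (P : Measure Ω) [IsProbabilityMeasure P]
    (μ : Measure ℝ) [IsProbabilityMeasure μ] (hac : μ ≪ volume)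
    (ω : G → Ω → ℝ)
    (hmeas : ∀ g, Measurable (ω g))
    (hlaw : ∀ g, Measure.map (ω g) P = μ)
    (hindep : iIndepFun (fun g => ω g) P) :
    ∀ᵐ ρ ∂P,
      (∀ t ∈ measSupport μ,
        E₀ + t ∈ closure {s : ℝ | ∃ Ψ : V × G → ℂ, Ψ ≠ 0 ∧ Memℓp Ψ 2 ∧
          ∀ p, cayH H vpos vneg gen (fun h => ω h ρ) Ψ p = (s : ℂ) * Ψ p}) ∧
      (∀ g : G, ∃ Ψ : Fin l → V × G → ℂ,
        (∀ i, Memℓp (Ψ i) 2) ∧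
        (∀ i p, cayH H vpos vneg gen (fun h => ω h ρ) (Ψ i) p
          = ((E₀ + ω g ρ : ℝ) : ℂ) * Ψ i p) ∧
        (∀ i j, ∑' p : V × G, (starRingEnd ℂ) (Ψ i p) * Ψ j p
          = if i = j then 1 else 0)) := by
  -- orthonormality of the fiber eigenvectors
  have horthfib : ∀ (g : G) (i j : Fin l),
      ∑' p : V × G, (starRingEnd ℂ) ((if p.2 = g then ψ i p.1 else 0))
        * (if p.2 = g then ψ j p.1 else 0) = if i = j then 1 else 0 := by
    intro g i j
    rw [tsum_fiber_eq g _ (fun q hq => by simp [hq]), ← horth i j]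
    simp
  -- a.s. every rational interval charged by μ is hit by some ω_g
  have hae : ∀ᵐ ρ ∂P, ∀ q : ℚ × ℚ,
      0 < μ (Set.Ioo (q.1 : ℝ) (q.2 : ℝ)) →
        ∃ g, ω g ρ ∈ Set.Ioo (q.1 : ℝ) (q.2 : ℝ) := by
    rw [MeasureTheory.ae_all_iff]
    intro q
    by_cases hq : 0 < μ (Set.Ioo (q.1 : ℝ) (q.2 : ℝ))
    · have hnull := avoid_null P μ ω hmeas hlaw hindep _ measurableSet_Ioo hq
      rw [MeasureTheory.ae_iff]
      refine measure_mono_null ?_ hnull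
      intro ρ hρ
      simp only [Set.mem_setOf_eq] at hρ ⊢
      intro g hg
      exact hρ (fun _ => ⟨g, hg⟩)
    · filter_upwards with ρ h
      exact absurd h hq
  filter_upwards [hae] with ρ hρ
  set i₀ : Fin l := ⟨0, by omega⟩ with hi₀
  constructor
  · -- pure point spectrum contains E₀ + supp μ
    intro t ht
    rw [Metric.mem_closure_iff]
    intro ε hε
    obtain ⟨a, ha1, ha2⟩ := exists_rat_btwn (sub_lt_self t hε)
    obtain ⟨b, hb1, hb2⟩ := exists_rat_btwn (lt_add_of_pos_right t hε)
    have hμab : 0 < μ (Set.Ioo (a : ℝ) (b : ℝ)) :=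
      ht _ isOpen_Ioo ⟨ha2, hb1⟩
    obtain ⟨g, hg1, hg2⟩ := hρ (a, b) hμab
    refine ⟨E₀ + ω g ρ, ⟨fun q => if q.2 = g then ψ i₀ q.1 else 0, ?_, memℓp_fiber g _, ?_⟩, ?_⟩
    · -- nonzero
      intro h0
      have h1 := horth i₀ i₀
      simp only [if_pos rfl] at h1
      have hz : ∀ v, ψ i₀ v = 0 := by
        intro v
        have := congrFun h0 (v, g)
        simpa using this
      simp [hz] at h1
    · intro p
      have := cayH_fiber H vpos vneg gen E₀ ψ heig x hvan hpos hneg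
        (fun h => ω h ρ) g i₀ p
      simpa using this
    · rw [Real.dist_eq]
      have h1 : t - ω g ρ < ε := by linarith
      have h2 : ω g ρ - t < ε := by linarith
      rw [abs_sub_lt_iff]
      constructor <;> linarith
  · -- multiplicity at least l
    intro g
    refine ⟨fun i q => if q.2 = g then ψ i q.1 else 0,
      fun i => memℓp_fiber g _, fun i p => ?_, fun i j => horthfib g i j⟩
    have := cayH_fiber H vpos vneg gen E₀ ψ heig x hvan hpos hneg
      (fun h => ω h ρ) g i p
    simpa using this
end

section
/- Let H̃_i = (Ṽ_i, Ẽ_i), 1 ≤ i ≤ l+m, be pairwise disjoint finite undirected graphs, let E₀ be a common eigenvalue of all the adjacency matrices Δ_{H̃_i} with chosen eigenvectors ψ_i, and let v_{i,1}, …, v_{i,m} ∈ Ṽ_i for each i (repetitions allowed). Form the graph ℋ with vertex set {x_1,…,x_m} ∪ (∪_i Ṽ_i) (the x_j new vertices) and edge set ∪_i (Ẽ_i ∪ {{x_j, v_{i,j}} : 1 ≤ j ≤ m}). Then the space of tuples α = (α_1,…,α_{l+m}) ∈ ℝ^{l+m} satisfying Σ_{i=1}^{l+m} α_i ψ_i(v_{i,j})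 = 0 for all 1 ≤ j ≤ m has dimension at least l, and for each such α the vector Ψ^{(α)} defined by Ψ^{(α)}(w) = α_i ψ_i(w) for w ∈ Ṽ_i and Ψ^{(α)}(x_j) = 0 is an eigenvector of the adjacency matrix Δ_ℋ with eigenvalue E₀ vanishing at x_1,…,x_m. Consequently E₀ is an eigenvalue of Δ_ℋ of multiplicity at least l admitting l orthonormal eigenvectors that vanish at x_1, …, x_m. -/
open scoped Classical

/-- The adjacency matrix of a finite graph, acting on real-valued functions on the vertex
set by `(Δ u)(v) = Σ_{w adjacent to v} u(w)`. -/
noncomputable def adjOpR {V : Type*} [Fintype V] (H : SimpleGraph V) (u : V → ℝ) (v : V) : ℝ :=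
  ∑ w : V, if H.Adj v w then u w else 0

/-- The glued graph `ℋ`: vertex set `{x_1,…,x_m} ∪ (∪_i Ṽ_i)` (with the pairwise disjoint
graphs `H̃_i` on `Ṽ_i = W i` and new vertices `x_j = inl j`), and edge set
`∪_i (Ẽ_i ∪ {{x_j, v_{i,j}} : 1 ≤ j ≤ m})`. -/
def glueGraph {l m : ℕ} (W : Fin (l + m) → Type*) (Hs : ∀ i, SimpleGraph (W i))
    (vsel : ∀ i, Fin m → W i) : SimpleGraph (Fin m ⊕ Σ i, W i) :=
  SimpleGraph.fromRel (fun a b =>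
    (∃ (i : Fin (l + m)) (v w : W i),
        a = Sum.inr ⟨i, v⟩ ∧ b = Sum.inr ⟨i, w⟩ ∧ (Hs i).Adj v w) ∨
    (∃ (i : Fin (l + m)) (j : Fin m), a = Sum.inl j ∧ b = Sum.inr ⟨i, vsel i j⟩))

section Aux

variable {l m : ℕ} {W : Fin (l + m) → Type*} {Hs : ∀ i, SimpleGraph (W i)}
    {vsel : ∀ i, Fin m → W i}

lemma glue_adj_inl_inl (j j' : Fin m) :
    ¬ (glueGraph W Hs vsel).Adj (Sum.inl j) (Sum.inl j') := by
  simp [glueGraph, SimpleGraph.fromRel_adj]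

lemma glue_adj_inl_inr (j : Fin m) (i : Fin (l + m)) (v : W i) :
    (glueGraph W Hs vsel).Adj (Sum.inl j) (Sum.inr ⟨i, v⟩) ↔ v = vsel i j := by
  simp [glueGraph, SimpleGraph.fromRel_adj, Sigma.mk.inj_iff]

lemma glue_adj_inr_inr_same (i : Fin (l + m)) (v v' : W i) :
    (glueGraph W Hs vsel).Adj (Sum.inr ⟨i, v⟩) (Sum.inr ⟨i, v'⟩) ↔ (Hs i).Adj v v' := by
  simp [glueGraph, SimpleGraph.fromRel_adj, Sigma.mk.inj_iff]
  constructor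
  · rintro ⟨hne, ⟨i1, v1, ⟨rfl, hv⟩, x, ⟨-, hx⟩, hadj⟩ | ⟨i1, v1, ⟨rfl, hv⟩, x, ⟨-, hx⟩, hadj⟩⟩
    · cases eq_of_heq hv; cases eq_of_heq hx; exact hadj
    · cases eq_of_heq hv; cases eq_of_heq hx; exact hadj.symm
  · intro hadj
    exact ⟨hadj.ne, Or.inl ⟨i, v, ⟨rfl, HEq.rfl⟩, v', ⟨rfl, HEq.rfl⟩, hadj⟩⟩

lemma glue_adj_inr_inr_ne {i i' : Fin (l + m)} (h : i ≠ i') (v : W i) (v' : W i') :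
    ¬ (glueGraph W Hs vsel).Adj (Sum.inr ⟨i, v⟩) (Sum.inr ⟨i', v'⟩) := by
  simp [glueGraph, SimpleGraph.fromRel_adj, Sigma.mk.inj_iff]
  intro _
  constructor
  · intro x x1 hix hv x2 hi'x hv' hadj; exact h (hix.trans hi'x.symm)
  · intro x x1 hi'x hv' x2 hix hv hadj; exact h (hix.trans hi'x.symm)

lemma glue_eigen_part [∀ i, Fintype (W i)] (E₀ : ℝ) (ψ : ∀ i, W i → ℝ)
    (heig : ∀ i v, adjOpR (Hs i) (ψ i) v = E₀ * ψ i v)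
    (α : Fin (l + m) → ℝ)
    (hα : ∀ j : Fin m, ∑ i : Fin (l + m), α i * ψ i (vsel i j) = 0) :
    ∀ w : Fin m ⊕ Σ i, W i,
      adjOpR (glueGraph W Hs vsel)
          (Sum.elim (fun _ => 0) (fun s => α s.1 * ψ s.1 s.2)) w
        = E₀ * Sum.elim (fun _ => 0) (fun s => α s.1 * ψ s.1 s.2) w := by
  intro w
  unfold adjOpR
  rw [Fintype.sum_sum_type]
  cases w with
  | inl j =>
      have h1 : ∑ j' : Fin m,
          (if (glueGraph W Hs vsel).Adj (Sum.inl j) (Sum.inl j') then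
            Sum.elim (fun _ => (0:ℝ)) (fun s : Σ i, W i => α s.1 * ψ s.1 s.2) (Sum.inl j')
          else 0) = 0 := by simp
      rw [h1, zero_add, ← Finset.univ_sigma_univ, Finset.sum_sigma]
      have h2 : ∀ i : Fin (l + m), ∑ v : W i,
          (if (glueGraph W Hs vsel).Adj (Sum.inl j) (Sum.inr ⟨i, v⟩) then
            α i * ψ i v else 0) = α i * ψ i (vsel i j) := by
        intro i
        simp [glue_adj_inl_inr]
      simp only [Sum.elim_inr, Sum.elim_inl]
      rw [Finset.sum_congr rfl (fun i _ => h2 i), hα j, mul_zero]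
  | inr s =>
      obtain ⟨i, v⟩ := s
      have h1 : ∑ j' : Fin m,
          (if (glueGraph W Hs vsel).Adj (Sum.inr ⟨i, v⟩) (Sum.inl j') then
            Sum.elim (fun _ => (0:ℝ)) (fun s : Σ i, W i => α s.1 * ψ s.1 s.2) (Sum.inl j')
          else 0) = 0 := by simp
      rw [h1, zero_add, ← Finset.univ_sigma_univ, Finset.sum_sigma]
      simp only [Sum.elim_inr]
      rw [Finset.sum_eq_single i]
      · have h3 : ∀ v' : W i,
            (if (glueGraph W Hs vsel).Adj (Sum.inr ⟨i, v⟩) (Sum.inr ⟨i, v'⟩) then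
              α i * ψ i v' else 0) = α i * (if (Hs i).Adj v v' then ψ i v' else 0) := by
          intro v'
          rw [glue_adj_inr_inr_same]
          split <;> simp
        rw [Finset.sum_congr rfl (fun v' _ => h3 v'), ← Finset.mul_sum]
        have h4 := heig i v
        unfold adjOpR at h4
        rw [h4]; ring
      · intro i' _ hi'
        apply Finset.sum_eq_zero
        intro v' _
        rw [if_neg (glue_adj_inr_inr_ne (Ne.symm hi') v v')]
      · intro h; exact absurd (Finset.mem_univ i) h

lemma glue_rank_part (M : Matrix (Fin m) (Fin (l + m)) ℝ) :
    l ≤ Module.finrank ℝ (LinearMap.ker M.mulVecLin) := by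
  have h := LinearMap.finrank_range_add_finrank_ker (Matrix.mulVecLin M)
  have h2 : Module.finrank ℝ (LinearMap.range M.mulVecLin) ≤ m := by
    have := Submodule.finrank_le (LinearMap.range M.mulVecLin)
    simpa using this
  have h3 : Module.finrank ℝ (Fin (l + m) → ℝ) = l + m := by simp
  omega

/-- The linear map `α ↦ Ψ^{(α)}` into Euclidean space. -/
noncomputable def glueTmap [∀ i, Fintype (W i)] (ψ : ∀ i, W i → ℝ) :
    (Fin (l + m) → ℝ) →ₗ[ℝ] EuclideanSpace ℝ (Fin m ⊕ Σ i, W i) where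
  toFun α := WithLp.toLp 2 (fun w => Sum.elim (fun _ => (0:ℝ)) (fun s : Σ i, W i => α s.1 * ψ s.1 s.2) w)
  map_add' a b := by ext w; cases w <;> simp [add_mul]
  map_smul' c a := by ext w; cases w <;> simp [mul_assoc]

lemma glueTmap_inj [∀ i, Fintype (W i)] (ψ : ∀ i, W i → ℝ) (hψne : ∀ i, ψ i ≠ 0) :
    Function.Injective (glueTmap (W := W) ψ) := by
  intro a b hab
  funext i
  obtain ⟨v, hv⟩ := Function.ne_iff.mp (hψne i)
  have := congrArg (fun x : EuclideanSpace ℝ (Fin m ⊕ Σ i, W i) => WithLp.ofLp x (Sum.inr (⟨i, v⟩ : Σ i, W i))) hab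
  simpa only [glueTmap, LinearMap.coe_mk, AddHom.coe_mk, Sum.elim_inr, WithLp.ofLp_toLp] using
    mul_right_cancel₀ hv this

end Aux

/-- Let `H̃_i`, `1 ≤ i ≤ l+m`, be pairwise disjoint finite graphs with a
common adjacency eigenvalue `E₀` and chosen eigenvectors `ψ_i`, and let
`v_{i,1},…,v_{i,m} ∈ Ṽ_i`.  Form the glued graph `ℋ` above.  Then the space of tuples
`α ∈ ℝ^{l+m}` with `Σ_i α_i ψ_i(v_{i,j}) = 0` for all `j` has dimension at least `l`; for
each such `α` the vector `Ψ^{(α)}` (equal to `α_i ψ_i` on `Ṽ_i` and `0` at the `x_j`) is an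
eigenvector of `Δ_ℋ` with eigenvalue `E₀` vanishing at `x_1,…,x_m`; consequently `E₀` is an
eigenvalue of `Δ_ℋ` of multiplicity at least `l`, admitting `l` orthonormal eigenvectors
vanishing at `x_1,…,x_m`. -/
theorem glueGraph_eigenvalue_multiplicity
    {l m : ℕ} (W : Fin (l + m) → Type*) [∀ i, Fintype (W i)]
    (Hs : ∀ i, SimpleGraph (W i)) (E₀ : ℝ) (ψ : ∀ i, W i → ℝ)
    (hψne : ∀ i, ψ i ≠ 0)
    (heig : ∀ i v, adjOpR (Hs i) (ψ i) v = E₀ * ψ i v)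
    (vsel : ∀ i, Fin m → W i) :
    (l ≤ Module.finrank ℝ
      (LinearMap.ker (Matrix.mulVecLin
        (Matrix.of fun (j : Fin m) (i : Fin (l + m)) => ψ i (vsel i j))))) ∧
    (∀ α : Fin (l + m) → ℝ,
      (∀ j : Fin m, ∑ i : Fin (l + m), α i * ψ i (vsel i j) = 0) →
      ∀ w : Fin m ⊕ Σ i, W i,
        adjOpR (glueGraph W Hs vsel)
            (Sum.elim (fun _ => 0) (fun s => α s.1 * ψ s.1 s.2)) w
          = E₀ * Sum.elim (fun _ => 0) (fun s => α s.1 * ψ s.1 s.2) w) ∧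
    (∃ Φ : Fin l → (Fin m ⊕ Σ i, W i) → ℝ,
      (∀ a b, ∑ w : Fin m ⊕ Σ i, W i, Φ a w * Φ b w = if a = b then 1 else 0) ∧
      (∀ a w, adjOpR (glueGraph W Hs vsel) (Φ a) w = E₀ * Φ a w) ∧
      (∀ a j, Φ a (Sum.inl j) = 0)) := by
  refine ⟨glue_rank_part _, fun α hα => glue_eigen_part E₀ ψ heig α hα, ?_⟩
  classical
  set M : Matrix (Fin m) (Fin (l + m)) ℝ :=
    Matrix.of fun (j : Fin m) (i : Fin (l + m)) => ψ i (vsel i j) with hM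
  set T := glueTmap (W := W) ψ with hT
  set S : Submodule ℝ (EuclideanSpace ℝ (Fin m ⊕ Σ i, W i)) :=
    (LinearMap.ker M.mulVecLin).map T with hS
  have hSrank : l ≤ Module.finrank ℝ S := by
    have he := (Submodule.equivMapOfInjective T (glueTmap_inj ψ hψne)
      (LinearMap.ker M.mulVecLin)).finrank_eq
    rw [hS, ← he]
    exact glue_rank_part M
  set b := stdOrthonormalBasis ℝ S with hb
  set Φ : Fin l → (Fin m ⊕ Σ i, W i) → ℝ :=
    fun a w => ((b (Fin.castLE hSrank a) : EuclideanSpace ℝ (Fin m ⊕ Σ i, W i)) w) with hΦ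
  have key : ∀ a : Fin l, ∃ α : Fin (l + m) → ℝ,
      (∀ j : Fin m, ∑ i : Fin (l + m), α i * ψ i (vsel i j) = 0) ∧
      Φ a = Sum.elim (fun _ => (0:ℝ)) (fun s => α s.1 * ψ s.1 s.2) := by
    intro a
    obtain ⟨α, hαker, hTα⟩ := Submodule.mem_map.mp (b (Fin.castLE hSrank a)).2
    refine ⟨α, ?_, ?_⟩
    · intro j
      have hker := LinearMap.mem_ker.mp hαker
      have hj : M.mulVec α j = 0 := by
        rw [← Matrix.mulVecLin_apply, hker]; rfl
      simp only [Matrix.mulVec, dotProduct, hM, Matrix.of_apply] at hj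
      rw [← hj]
      exact Finset.sum_congr rfl fun i _ => mul_comm _ _
    · funext w
      exact (congrArg (fun x : EuclideanSpace ℝ (Fin m ⊕ Σ i, W i) => WithLp.ofLp x w) hTα).symm
  refine ⟨Φ, ?_, ?_, ?_⟩
  · intro a c
    have hon := b.orthonormal
    rw [orthonormal_iff_ite] at hon
    have h1 := hon (Fin.castLE hSrank a) (Fin.castLE hSrank c)
    rw [Submodule.coe_inner] at h1
    have h2 : (if Fin.castLE hSrank a = Fin.castLE hSrank c then (1:ℝ) else 0)
        = if a = c then 1 else 0 := by
      simp [Fin.castLE_injective hSrank |>.eq_iff]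
    rw [← h2, ← h1]
    simp [PiLp.inner_apply, RCLike.inner_apply, Φ]
    congr 1 <;> exact Finset.sum_congr rfl fun _ _ => mul_comm _ _
  · intro a w
    obtain ⟨α, hα, hΦa⟩ := key a
    rw [hΦa]
    exact glue_eigen_part E₀ ψ heig α hα w
  · intro a j
    obtain ⟨α, hα, hΦa⟩ := key a
    rw [hΦa]
    rfl
end

section
/- Let p and q be distinct prime numbers. Then {2 cos(π j /(2p)) : 1 ≤ j ≤ 2p−1} ∩ {2 cos(π k /(2q)) : 1 ≤ k ≤ 2q−1} = {0}; equivalently, the spectra of the adjacency matrices of the path graphs on 2p−1 and 2q−1 vertices intersect exactly in {0}. -/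
lemma mid_cos_zero (p : ℕ) (hp : 0 < p) :
    (2 : ℝ) * Real.cos (Real.pi * p / (2 * p)) = 0 := by
  have hpr : (p : ℝ) ≠ 0 := Nat.cast_ne_zero.mpr hp.ne'
  have : Real.pi * p / (2 * p) = Real.pi / 2 := by
    field_simp
  rw [this, Real.cos_pi_div_two, mul_zero]

/-- For distinct primes `p` and `q`,
`{2 cos(π j/(2p)) : 1 ≤ j ≤ 2p-1} ∩ {2 cos(π k/(2q)) : 1 ≤ k ≤ 2q-1} = {0}`;
equivalently, the spectra of the adjacency matrices of the path graphs on `2p-1` and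
`2q-1` vertices intersect exactly in `{0}`. -/
theorem path_spectra_intersection_primes (p q : ℕ) (hp : p.Prime) (hq : q.Prime)
    (hpq : p ≠ q) :
    {x : ℝ | ∃ j : ℕ, 1 ≤ j ∧ j ≤ 2 * p - 1 ∧
        x = 2 * Real.cos (Real.pi * j / (2 * p))} ∩
      {x : ℝ | ∃ k : ℕ, 1 ≤ k ∧ k ≤ 2 * q - 1 ∧
        x = 2 * Real.cos (Real.pi * k / (2 * q))} = {0} := by
  have hp0 : 0 < p := hp.pos
  have hq0 : 0 < q := hq.pos
  have hp0r : (0 : ℝ) < p := Nat.cast_pos.mpr hp0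
  have hq0r : (0 : ℝ) < q := Nat.cast_pos.mpr hq0
  ext x
  simp only [Set.mem_inter_iff, Set.mem_setOf_eq, Set.mem_singleton_iff]
  constructor
  · rintro ⟨⟨j, hj1, hj2, hxj⟩, ⟨k, hk1, hk2, hxk⟩⟩
    -- angles in [0, π]
    have hθp : Real.pi * j / (2 * p) ∈ Set.Icc 0 Real.pi := by
      constructor
      · positivity
      · rw [div_le_iff₀ (by positivity)]
        have : (j : ℝ) ≤ 2 * p := by
          have : j ≤ 2 * p := hj2.trans (Nat.sub_le _ _)
          exact_mod_cast this
        nlinarith [Real.pi_pos]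
    have hθq : Real.pi * k / (2 * q) ∈ Set.Icc 0 Real.pi := by
      constructor
      · positivity
      · rw [div_le_iff₀ (by positivity)]
        have : (k : ℝ) ≤ 2 * q := by
          have : k ≤ 2 * q := hk2.trans (Nat.sub_le _ _)
          exact_mod_cast this
        nlinarith [Real.pi_pos]
    have hcos : Real.cos (Real.pi * j / (2 * p)) = Real.cos (Real.pi * k / (2 * q)) := by
      have := hxj.symm.trans hxk
      linarith
    have hang : Real.pi * j / (2 * p) = Real.pi * k / (2 * q) :=
      Real.injOn_cos hθp hθq hcos
    have hjq : j * q = k * p := by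
      have hpi := Real.pi_ne_zero
      field_simp at hang
      have : (j : ℝ) * q = k * p := by
        nlinarith [Real.pi_pos]
      exact_mod_cast this
    have hpj : p ∣ j := by
      have : p ∣ j * q := ⟨k, by linarith [hjq]⟩
      rcases (Nat.Prime.dvd_mul hp).mp this with h | h
      · exact h
      · exact absurd ((Nat.prime_dvd_prime_iff_eq hp hq).mp h) hpq
    have hjp : j = p := by
      rcases hpj with ⟨c, rfl⟩
      have hc1 : 1 ≤ c := by
        rcases Nat.eq_zero_or_pos c with rfl | h
        · simp at hj1
        · exact h
      have hc2 : c < 2 := by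
        by_contra h
        push_neg at h
        have : 2 * p ≤ p * c := by nlinarith
        omega
      have : c = 1 := by omega
      simp [this]
    rw [hxj, hjp]
    exact mid_cos_zero p hp0
  · rintro rfl
    refine ⟨⟨p, hp0, by omega, (mid_cos_zero p hp0).symm⟩,
      ⟨q, hq0, by omega, (mid_cos_zero q hq0).symm⟩⟩
end
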